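/- arXiv:1904.09017 — 13 statements merged into one kernel-verified Lean document; each statement's English description precedes it below -/
import Mathlib

section
/- Let V be a vector space over a field K, E a set, (W x)_{x ∈ E} a family of K-subspaces of V, and z ∈ E a fixed element. Then the family (W x)_{x ∈ E} is independent (i.e. for every x ∈ E, W x ⊓ (⨆_{y ∈ E, y ≠ x} W y) = ⊥, equivalently the canonical map ⨁_{x ∈ E} W x → V sending a finitely supported family to its sum is injective) if and only if for every x ∈ E with x ≠ z one has W x ⊓ (⨆_{y ∈ E, y ≠ x} W y) = ⊥. -/
/-- A family `(W x)_{x ∈ E}` of subspaces is independent (every member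
intersects the sum of the others trivially) iff this holds for every `x ≠ z`,
for a fixed `z ∈ E`. -/
theorem stmt_0 {K V E : Type*} [Field K] [AddCommGroup V] [Module K V]
    (W : E → Submodule K V) (z : E) :
    (∀ x : E, W x ⊓ (⨆ y, ⨆ _ : y ≠ x, W y) = ⊥) ↔
      (∀ x : E, x ≠ z → W x ⊓ (⨆ y, ⨆ _ : y ≠ x, W y) = ⊥) := by
  classical
  constructor
  · exact fun h x _ => h x
  · intro h x
    rcases eq_or_ne x z with rfl | hx
    swap
    · exact h x hx
    rw [eq_bot_iff]
    rintro v ⟨hvz, hv⟩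
    simp only [SetLike.mem_coe] at hvz hv ⊢
    rw [Submodule.mem_biSup_iff_exists_dfinsupp] at hv
    obtain ⟨f, hf⟩ := hv
    rw [DFinsupp.filter_ne_eq_erase] at hf
    set g : Π₀ y, W y := f.erase x with hg
    set L := DFinsupp.lsum ℕ (M := fun i ↦ ↥(W i)) (fun i => (W i).subtype) with hL
    have hgx : ∀ y : E, g y = 0 := by
      intro y
      rcases eq_or_ne y x with rfl | hyx
      · simp [hg]
      -- `L (g.erase y) ∈ ⨆ t ≠ y, W t`
      have h1 : L (g.erase y) ∈ ⨆ t, ⨆ _ : t ≠ y, W t := by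
        rw [Submodule.mem_biSup_iff_exists_dfinsupp]
        exact ⟨g, by rw [DFinsupp.filter_ne_eq_erase]⟩
      have h2 : v ∈ ⨆ t, ⨆ _ : t ≠ y, W t :=
        le_iSup₂ (f := fun t (_ : t ≠ y) => W t) x hyx.symm hvz
      have hsplit : (g y : V) + L (g.erase y) = v := by
        have := DFinsupp.erase_add_single y g
        calc (g y : V) + L (g.erase y) = L (g.erase y + DFinsupp.single y (g y)) := by
              rw [map_add, DFinsupp.lsum_single, Submodule.subtype_apply, add_comm]
          _ = L g := by rw [this]
          _ = v := hf
      have hmem : (g y : V) ∈ W y ⊓ (⨆ t, ⨆ _ : t ≠ y, W t) := by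
        refine ⟨(g y).2, ?_⟩
        have : (g y : V) = v - L (g.erase y) := by
          rw [← hsplit]; abel
        rw [this]
        exact Submodule.sub_mem _ h2 h1
      rw [h y hyx] at hmem
      exact_mod_cast Submodule.mem_bot K |>.mp hmem
    have : g = 0 := DFinsupp.ext fun y => hgx y
    rw [← hf, this, map_zero]
    exact Submodule.zero_mem ⊥
end

section
/- Let 𝒜 be a finite partially ordered set, V a vector space over a field K, and W : 𝒜 → Submodule K V a monotone map. Then W is decomposable if and only if W satisfies condition (C). -/
open Submodule

section Aux

variable {K V : Type*} [Field K] [AddCommGroup V] [Module K V]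

/-- If each submodule is disjoint from the span of its predecessors (w.r.t. a linear order),
then any finitely supported sum of members equal to zero has all terms zero. -/
lemma aux_sum_eq_zero {ι : Type*} [LinearOrder ι] (t : ι → Submodule K V)
    (h : ∀ i, t i ⊓ (⨆ j, ⨆ _ : j < i, t j) = ⊥) :
    ∀ F : Finset ι, ∀ x : ι → V, (∀ j, x j ∈ t j) → ∑ j ∈ F, x j = 0 → ∀ j ∈ F, x j = 0 := by
  classical
  intro F
  induction F using Finset.induction_on_max with
  | empty => simp
  | insert a s ha ih =>
    intro x hx hsum j hj
    have hanotin : a ∉ s := fun hmem => lt_irrefl a (ha a hmem)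
    rw [Finset.sum_insert hanotin] at hsum
    have hs : ∑ j ∈ s, x j ∈ ⨆ j, ⨆ _ : j < a, t j :=
      Submodule.sum_mem _ fun c hc =>
        Submodule.mem_iSup_of_mem c (Submodule.mem_iSup_of_mem (ha c hc) (hx c))
    have hxa : x a = 0 := by
      have hmem : x a ∈ t a ⊓ (⨆ j, ⨆ _ : j < a, t j) := by
        refine Submodule.mem_inf.2 ⟨hx a, ?_⟩
        have : x a = -∑ j ∈ s, x j := by rw [eq_neg_iff_add_eq_zero]; exact hsum
        rw [this]
        exact Submodule.neg_mem _ hs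
      rw [h a] at hmem
      simpa using hmem
    have hsum' : ∑ j ∈ s, x j = 0 := by
      rw [hxa, zero_add] at hsum; exact hsum
    rcases Finset.mem_insert.1 hj with rfl | hj'
    · exact hxa
    · exact ih x hx hsum' j hj'

/-- For a fully independent family, a zero sum has all terms zero. -/
lemma aux_indep_sum {ι : Type*} [Fintype ι] (t : ι → Submodule K V)
    (h : ∀ i, t i ⊓ (⨆ j, ⨆ _ : j ≠ i, t j) = ⊥)
    (x : ι → V) (hx : ∀ j, x j ∈ t j) (hsum : ∑ j, x j = 0) : ∀ j, x j = 0 := by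
  classical
  intro j
  have hsplit : x j + ∑ i ∈ Finset.univ.erase j, x i = 0 := by
    rw [Finset.add_sum_erase _ _ (Finset.mem_univ j)]; exact hsum
  have hrest : ∑ i ∈ Finset.univ.erase j, x i ∈ ⨆ i, ⨆ _ : i ≠ j, t i :=
    Submodule.sum_mem _ fun c hc =>
      Submodule.mem_iSup_of_mem c
        (Submodule.mem_iSup_of_mem (Finset.ne_of_mem_erase hc) (hx c))
  have hmem : x j ∈ t j ⊓ (⨆ i, ⨆ _ : i ≠ j, t i) := by
    refine Submodule.mem_inf.2 ⟨hx j, ?_⟩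
    have : x j = -∑ i ∈ Finset.univ.erase j, x i := by
      rw [eq_neg_iff_add_eq_zero]; exact hsplit
    rw [this]
    exact Submodule.neg_mem _ hrest
  rw [h j] at hmem
  simpa using hmem

/-- Independence from disjointness with predecessors, over a finite linear order. -/
lemma aux_indep_of_ordered {ι : Type*} [LinearOrder ι] [Fintype ι] (t : ι → Submodule K V)
    (h : ∀ i, t i ⊓ (⨆ j, ⨆ _ : j < i, t j) = ⊥) :
    ∀ i, t i ⊓ (⨆ j, ⨆ _ : j ≠ i, t j) = ⊥ := by
  classical
  intro i
  refine le_antisymm ?_ bot_le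
  rintro x hx
  obtain ⟨hx1, hx2⟩ := Submodule.mem_inf.1 hx
  rw [Submodule.mem_iSup_iff_exists_finsupp] at hx2
  obtain ⟨f, hf, hfsum⟩ := hx2
  have hfi : f i = 0 := by
    have := hf i
    rw [iSup_neg (by simp)] at this
    simpa using this
  have hsum_univ : ∑ j, f j = x := by
    rw [← hfsum, Finsupp.sum]
    exact (Finset.sum_subset (Finset.subset_univ _) (by
      intro y _ hy
      simpa using Finsupp.notMem_support_iff.1 hy)).symm
  set g : ι → V := fun j => if j = i then -x else f j with hg
  have hgmem : ∀ j, g j ∈ t j := by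
    intro j
    by_cases hji : j = i
    · subst hji; simpa [hg] using Submodule.neg_mem _ hx1
    · have := hf j
      rw [iSup_pos hji] at this
      simpa [hg, hji] using this
  have hgsum : ∑ j, g j = 0 := by
    have : ∑ j, g j = -x + ∑ j ∈ Finset.univ.erase i, f j := by
      rw [← Finset.add_sum_erase _ g (Finset.mem_univ i)]
      simp only [hg, if_pos rfl]
      congr 1
      exact Finset.sum_congr rfl fun j hj => if_neg (Finset.ne_of_mem_erase hj)
    rw [this, Finset.sum_erase _ (by rw [hfi]), hsum_univ]
    simp
  have := aux_sum_eq_zero t h Finset.univ g hgmem hgsum i (Finset.mem_univ i)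
  simp only [hg, if_pos rfl, neg_eq_zero] at this
  simp [this]

end Aux

/-- For a finite poset `𝒜`, a monotone `W : 𝒜 → Submodule K V` is
decomposable iff it satisfies condition (C). -/
theorem stmt_1 {K V A : Type*} [Field K] [AddCommGroup V] [Module K V]
    [PartialOrder A] [Finite A]
    (W : A → Submodule K V) (hW : Monotone W) :
    (∃ s : A → Submodule K V,
        (∀ a : A, s a ⊓ (⨆ b, ⨆ _ : b ≠ a, s b) = ⊥) ∧
        (∀ a : A, W a = ⨆ b, ⨆ _ : b ≤ a, s b)) ↔
      (∀ a : A, W a ⊓ (⨆ b, ⨆ _ : ¬ a ≤ b, W b) ≤ ⨆ b, ⨆ _ : b < a, W b) := by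
  classical
  cases nonempty_fintype A
  constructor
  · rintro ⟨s, hind, hWs⟩ a x hx
    obtain ⟨hx1, hx2⟩ := Submodule.mem_inf.1 hx
    -- representation of x from W a
    rw [hWs a, Submodule.mem_iSup_iff_exists_finsupp] at hx1
    obtain ⟨f, hf, hfsum⟩ := hx1
    -- representation of x from the other sup
    have hx2' : x ∈ ⨆ c, ⨆ _ : ∃ b, ¬ a ≤ b ∧ c ≤ b, s c := by
      refine (iSup₂_le fun b hb => ?_ : (⨆ b, ⨆ _ : ¬ a ≤ b, W b) ≤ _) hx2
      rw [hWs b]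
      exact iSup₂_le fun c hc =>
        le_iSup₂_of_le c ⟨b, hb, hc⟩ le_rfl
    rw [Submodule.mem_iSup_iff_exists_finsupp] at hx2'
    obtain ⟨g, hg, hgsum⟩ := hx2'
    have hsum_f : ∑ j, f j = x := by
      rw [← hfsum, Finsupp.sum]
      exact (Finset.sum_subset (Finset.subset_univ _) (by
        intro y _ hy
        simpa using Finsupp.notMem_support_iff.1 hy)).symm
    have hsum_g : ∑ j, g j = x := by
      rw [← hgsum, Finsupp.sum]
      exact (Finset.sum_subset (Finset.subset_univ _) (by
        intro y _ hy
        simpa using Finsupp.notMem_support_iff.1 hy)).symm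
    have hmem_f : ∀ c, f c ∈ s c := fun c =>
      (iSup_const_le : (⨆ _ : c ≤ a, s c) ≤ s c) (hf c)
    have hmem_g : ∀ c, g c ∈ s c := fun c =>
      (iSup_const_le : (⨆ _ : ∃ b, ¬ a ≤ b ∧ c ≤ b, s c) ≤ s c) (hg c)
    have hdiff : ∀ c, f c - g c = 0 := by
      refine aux_indep_sum s hind (fun c => f c - g c)
        (fun c => Submodule.sub_mem _ (hmem_f c) (hmem_g c)) ?_
      rw [Finset.sum_sub_distrib, hsum_f, hsum_g, sub_self]
    have hfg : ∀ c, f c = g c := fun c => sub_eq_zero.1 (hdiff c)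
    rw [← hsum_f]
    refine Submodule.sum_mem _ fun c _ => ?_
    by_cases hfc : f c = 0
    · rw [hfc]; exact Submodule.zero_mem _
    · have hca : c ≤ a := by
        by_contra hca
        have h := hf c
        rw [iSup_neg hca] at h
        exact hfc (by simpa using h)
      have hcb : ∃ b, ¬ a ≤ b ∧ c ≤ b := by
        by_contra hcb
        have h := hg c
        rw [iSup_neg hcb] at h
        exact hfc (by rw [hfg c]; simpa using h)
      obtain ⟨b, hab, hcb'⟩ := hcb
      have hcne : c ≠ a := fun h => hab (h ▸ hcb')
      have hclt : c < a := lt_of_le_of_ne hca hcne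
      have : f c ∈ W c := by
        rw [hWs c]
        exact Submodule.mem_iSup_of_mem c (Submodule.mem_iSup_of_mem le_rfl (hmem_f c))
      exact Submodule.mem_iSup_of_mem c (Submodule.mem_iSup_of_mem hclt this)
  · intro hC
    -- construct the decomposition
    set U : A → Submodule K V := fun a => ⨆ b, ⨆ _ : b < a, W b with hU
    have hUW : ∀ a, U a ≤ W a := fun a => iSup₂_le fun b hb => hW hb.le
    choose Q hQ using fun a => Submodule.exists_isCompl (U a)
    set s : A → Submodule K V := fun a => W a ⊓ Q a with hs
    have hdisj : ∀ a, s a ⊓ U a = ⊥ := by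
      intro a
      refine le_antisymm ?_ bot_le
      calc s a ⊓ U a ≤ Q a ⊓ U a := inf_le_inf_right _ inf_le_right
        _ = U a ⊓ Q a := inf_comm _ _
        _ = ⊥ := (hQ a).inf_eq_bot
    have hsup : ∀ a, U a ⊔ s a = W a := by
      intro a
      have h1 : U a ⊔ (Q a ⊓ W a) = (U a ⊔ Q a) ⊓ W a :=
        (sup_inf_assoc_of_le (Q a) (hUW a)).symm
      calc U a ⊔ s a = U a ⊔ (Q a ⊓ W a) := by rw [hs, inf_comm]
        _ = (U a ⊔ Q a) ⊓ W a := h1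
        _ = ⊤ ⊓ W a := by rw [(hQ a).sup_eq_top]
        _ = W a := top_inf_eq _
    have hWs : ∀ a, W a = ⨆ b, ⨆ _ : b ≤ a, s b := by
      intro a
      induction a using WellFoundedLT.induction with
      | ind a ih =>
        have hUa : U a = ⨆ c, ⨆ _ : c < a, s c := by
          refine le_antisymm (iSup₂_le fun b hb => ?_) (iSup₂_le fun c hc => ?_)
          · rw [ih b hb]
            exact iSup₂_le fun c hc => le_iSup₂_of_le c (lt_of_le_of_lt hc hb) le_rfl
          · have : s c ≤ W c := inf_le_left
            exact this.trans (le_iSup₂_of_le c hc le_rfl)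
        rw [← hsup a, hUa]
        refine le_antisymm (sup_le (iSup₂_le fun c hc => le_iSup₂_of_le c hc.le le_rfl)
          (le_iSup₂_of_le a le_rfl le_rfl)) (iSup₂_le fun c hc => ?_)
        rcases eq_or_lt_of_le hc with rfl | hlt
        · exact le_sup_right
        · exact le_sup_left.trans' (le_iSup₂_of_le c hlt le_rfl)
    refine ⟨s, ?_, hWs⟩
    -- independence via a linear extension
    letI : Fintype (LinearExtension A) := ‹Fintype A›
    have key : ∀ i : LinearExtension A,
        (fun j : LinearExtension A => s (show A from j)) i ⊓
          (⨆ j, ⨆ _ : j < i, (fun j : LinearExtension A => s (show A from j)) j) = ⊥ := by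
      intro i
      refine le_antisymm ?_ bot_le
      set a : A := (show A from i) with ha
      have h1 : (⨆ j : LinearExtension A, ⨆ _ : j < i,
          s (show A from j)) ≤ ⨆ b : A, ⨆ _ : ¬ a ≤ b, W b := by
        refine iSup₂_le fun j hj => ?_
        have hnab : ¬ a ≤ (show A from j) := by
          intro hab
          exact absurd (toLinearExtension.monotone hab) (not_le.2 hj)
        exact (inf_le_left : s (show A from j) ≤ W (show A from j)).trans
          (le_iSup₂_of_le (show A from j) hnab le_rfl)
      have h2 : s a ⊓ (⨆ j : LinearExtension A, ⨆ _ : j < i, s (show A from j)) ≤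
          s a ⊓ U a := by
        refine le_inf inf_le_left ?_
        calc s a ⊓ _ ≤ W a ⊓ (⨆ b : A, ⨆ _ : ¬ a ≤ b, W b) :=
              inf_le_inf inf_le_left h1
          _ ≤ U a := hC a
      exact h2.trans_eq (hdisj a)
    intro a
    exact aux_indep_of_ordered (ι := LinearExtension A)
      (fun j => s (show A from j)) key (toLinearExtension a)
end

section
/- Let 𝒜 be a finite partially ordered set, V a vector space over a field K, and W : 𝒜 → Submodule K V a monotone map. Then W is decomposable if and only if W satisfies the intersection property (I). -/
open Submodule

section aux

variable {K V A : Type*} [Field K] [AddCommGroup V] [Module K V]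

/-- Uniqueness of representations for a family of submodules each disjoint from
the span of its predecessors in a linear order. -/
private lemma sum_zero_of_disjoint {I : Type*} [LinearOrder I] (e : A → I)
    (he : Function.Injective e) (s : A → Submodule K V)
    (hd : ∀ a : A, Disjoint (s a) (⨆ b, ⨆ _ : e b < e a, s b)) :
    ∀ (F : Finset A) (g : A → V), (∀ b, g b ∈ s b) → (∑ b ∈ F, g b) = 0 →
      ∀ b ∈ F, g b = 0 := by
  classical
  intro F
  induction F using Finset.induction_on_max_value e with
  | empty => intro g _ _ b hb; exact absurd hb (Finset.notMem_empty b)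
  | insert m F hmF hm ih =>
    intro g hg hsum b hb
    rw [Finset.sum_insert hmF] at hsum
    have hgm : g m = 0 := by
      have h1 : g m = -∑ b ∈ F, g b := eq_neg_of_add_eq_zero_left hsum
      have h2 : g m ∈ ⨆ b, ⨆ _ : e b < e m, s b := by
        rw [h1]
        refine neg_mem (sum_mem fun c hc => ?_)
        have hclt : e c < e m := by
          refine lt_of_le_of_ne (hm c hc) (fun hEq => ?_)
          exact hmF (he hEq ▸ hc)
        have h3 : s c ≤ ⨆ b, ⨆ _ : e b < e m, s b :=
          le_iSup_of_le c (le_iSup_of_le hclt le_rfl)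
        exact h3 (hg c)
      exact (Submodule.disjoint_def.mp (hd m)) _ (hg m) h2
    rw [hgm, zero_add] at hsum
    rcases Finset.mem_insert.mp hb with rfl | hb'
    · exact hgm
    · exact ih g hg hsum b hb'

/-- Extract a finite-sum representation from membership in a `biSup`. -/
private lemma exists_repr [Fintype A] (s : A → Submodule K V) (p : A → Prop) {x : V}
    (hx : x ∈ ⨆ b, ⨆ _ : p b, s b) :
    ∃ g : A → V, (∀ b, g b ∈ s b) ∧ (∀ b, ¬ p b → g b = 0) ∧ ∑ b, g b = x := by
  classical
  rw [Submodule.mem_iSup_iff_exists_dfinsupp'] at hx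
  obtain ⟨f, hf⟩ := hx
  refine ⟨fun b => (f b : V), fun b => ?_, fun b hb => ?_, ?_⟩
  · exact (iSup_le fun _ => le_rfl : (⨆ _ : p b, s b) ≤ s b) (f b).2
  · have hle : (⨆ _ : p b, s b) ≤ ⊥ := by rw [iSup_neg hb]
    exact Submodule.mem_bot K |>.mp (hle (f b).2)
  · rw [← hf, DFinsupp.sum]
    exact (Finset.sum_subset (Finset.subset_univ _) (fun b _ hb => by
      rw [DFinsupp.notMem_support_iff] at hb; simp [hb])).symm

end aux

/-- For a finite poset `𝒜`, a monotone `W : 𝒜 → Submodule K V` is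
decomposable iff it satisfies the intersection property (I). -/
theorem stmt_2 {K V A : Type*} [Field K] [AddCommGroup V] [Module K V]
    [PartialOrder A] [Finite A]
    (W : A → Submodule K V) (hW : Monotone W) :
    (∃ s : A → Submodule K V,
        (∀ a : A, s a ⊓ (⨆ b, ⨆ _ : b ≠ a, s b) = ⊥) ∧
        (∀ a : A, W a = ⨆ b, ⨆ _ : b ≤ a, s b)) ↔
      (∀ B C : Set A, IsLowerSet B → IsLowerSet C →
        (⨆ b ∈ B, W b) ⊓ (⨆ c ∈ C, W c) ≤ ⨆ a ∈ B ∩ C, W a) := by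
  classical
  cases nonempty_fintype A
  constructor
  · -- decomposable → (I)
    rintro ⟨s, hind, hsum⟩ B C hB hC
    have hsle : ∀ a, s a ≤ W a := fun a => by
      rw [hsum a]; exact le_iSup_of_le a (le_iSup_of_le le_rfl le_rfl)
    have hlow : ∀ (L : Set A), IsLowerSet L → (⨆ b ∈ L, W b) = ⨆ b ∈ L, s b := by
      intro L hL
      refine le_antisymm (iSup₂_le fun b hb => ?_) (iSup₂_le fun b hb => le_iSup₂_of_le b hb (hsle b))
      rw [hsum b]
      exact iSup₂_le fun c hcb => le_iSup₂_of_le c (hL hcb hb) le_rfl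
    have hd : ∀ a : A,
        Disjoint (s a) (⨆ b, ⨆ _ : toLinearExtension b < toLinearExtension a, s b) := by
      intro a
      refine (disjoint_iff.mpr (hind a)).mono_right ?_
      refine iSup₂_le fun b hb => le_iSup₂_of_le b (fun h => hb.ne (congrArg _ h)) le_rfl
    rw [hlow B hB, hlow C hC]
    intro x hx
    rw [Submodule.mem_inf] at hx
    obtain ⟨g, hg, hg0, hgsum⟩ := exists_repr s (· ∈ B) hx.1
    obtain ⟨h, hh, hh0, hhsum⟩ := exists_repr s (· ∈ C) hx.2
    have hzero : ∑ b, (g b - h b) = 0 := by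
      rw [Finset.sum_sub_distrib, hgsum, hhsum, sub_self]
    have hgh : ∀ b : A, g b = h b := by
      intro b
      have := sum_zero_of_disjoint toLinearExtension (fun _ _ h => h) s hd Finset.univ
        (fun b => g b - h b) (fun b => sub_mem (hg b) (hh b)) hzero b (Finset.mem_univ _)
      exact sub_eq_zero.mp this
    rw [← hgsum]
    refine sum_mem fun b _ => ?_
    by_cases hb : b ∈ B ∩ C
    · exact (show s b ≤ ⨆ a ∈ B ∩ C, W a from le_iSup₂_of_le b hb (hsle b)) (hg b)
    · have : g b = 0 := by
        rcases not_and_or.mp hb with hb' | hb'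
        · exact hg0 b hb'
        · rw [hgh b]; exact hh0 b hb'
      rw [this]; exact zero_mem _
  · -- (I) → decomposable
    intro hI
    have hex : ∀ a : A, ∃ sa : Submodule K V, sa ≤ W a ∧
        Disjoint sa (⨆ b, ⨆ _ : b < a, W b) ∧
        sa ⊔ (⨆ b, ⨆ _ : b < a, W b) = W a := by
      intro a
      set U : Submodule K V := ⨆ b, ⨆ _ : b < a, W b with hU
      have hUle : U ≤ W a := iSup₂_le fun b hb => hW hb.le
      obtain ⟨q, hq⟩ := Submodule.exists_isCompl (Submodule.comap (W a).subtype U)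
      refine ⟨Submodule.map (W a).subtype q, Submodule.map_subtype_le _ _, ?_, ?_⟩
      · rw [disjoint_iff, eq_bot_iff]
        intro x hx
        rw [Submodule.mem_inf] at hx
        obtain ⟨⟨y, hy, rfl⟩, hx2⟩ := hx
        have hyp : y ∈ Submodule.comap (W a).subtype U := hx2
        have : y ∈ (⊥ : Submodule K ↥(W a)) := by
          rw [← hq.inf_eq_bot]; exact ⟨hyp, hy⟩
        rw [Submodule.mem_bot] at this
        rw [this]; simp
      · have h1 := congrArg (Submodule.map (W a).subtype) hq.sup_eq_top
        rw [Submodule.map_sup, Submodule.map_comap_subtype, Submodule.map_top,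
          Submodule.range_subtype, inf_eq_right.mpr hUle] at h1
        rw [sup_comm]
        exact h1
    choose s hsle hdisj hsupr using hex
    have claim1 : ∀ a : A, W a = ⨆ b, ⨆ _ : b ≤ a, s b := by
      intro a
      induction a using WellFoundedLT.induction with
      | _ a ih =>
        apply le_antisymm
        · rw [← hsupr a]
          apply sup_le
          · exact le_iSup_of_le a (le_iSup_of_le le_rfl le_rfl)
          · refine iSup₂_le fun b hb => ?_
            rw [ih b hb]
            exact iSup₂_le fun c hc => le_iSup₂_of_le c (hc.trans hb.le) le_rfl
        · refine iSup₂_le fun b hb => ?_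
          rcases lt_or_eq_of_le hb with hblt | rfl
          · calc s b ≤ W b := hsle b
              _ ≤ ⨆ b', ⨆ _ : b' < a, W b' := le_iSup₂_of_le b hblt le_rfl
              _ ≤ W a := by rw [← hsupr a]; exact le_sup_right
          · rw [← hsupr b]; exact le_sup_left
    have hlow : ∀ (L : Set A), IsLowerSet L → (⨆ b ∈ L, W b) = ⨆ b ∈ L, s b := by
      intro L hL
      refine le_antisymm (iSup₂_le fun b hb => ?_) (iSup₂_le fun b hb => le_iSup₂_of_le b hb (hsle b))
      rw [claim1 b]
      exact iSup₂_le fun c hcb => le_iSup₂_of_le c (hL hcb hb) le_rfl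
    have hdisjL : ∀ (a : A) (L : Set A), IsLowerSet L → a ∉ L →
        Disjoint (s a) (⨆ b ∈ L, s b) := by
      intro a L hL haL
      rw [disjoint_iff, ← hlow L hL, eq_bot_iff]
      intro x hx
      rw [Submodule.mem_inf] at hx
      have hxa : x ∈ ⨆ b ∈ {b | b ≤ a}, W b := by
        have hle : W a ≤ ⨆ b ∈ {b : A | b ≤ a}, W b := le_iSup₂_of_le a le_rfl le_rfl
        exact hle (hsle a hx.1)
      have hlow1 : IsLowerSet {b | b ≤ a} := fun c b hbc hc => hbc.trans hc
      have hmem := hI {b | b ≤ a} L hlow1 hL ⟨hxa, hx.2⟩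
      have hsub : (⨆ b ∈ {b | b ≤ a} ∩ L, W b) ≤ ⨆ b, ⨆ _ : b < a, W b := by
        refine iSup₂_le fun b hb => le_iSup₂_of_le b ?_ le_rfl
        exact lt_of_le_of_ne hb.1 (fun h => haL (h ▸ hb.2))
      exact (Submodule.disjoint_def.mp (hdisj a)) x hx.1 (hsub hmem)
    have hd : ∀ a : A,
        Disjoint (s a) (⨆ b, ⨆ _ : toLinearExtension b < toLinearExtension a, s b) := by
      intro a
      have hLlow : IsLowerSet {b : A | toLinearExtension b < toLinearExtension a} := by
        intro c b hbc hc
        exact lt_of_le_of_lt (toLinearExtension.monotone hbc) hc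
      have := hdisjL a _ hLlow (fun h => lt_irrefl (toLinearExtension a) h)
      exact this
    refine ⟨s, fun a => ?_, claim1⟩
    rw [eq_bot_iff]
    intro x hx
    rw [Submodule.mem_inf] at hx
    obtain ⟨hxa, hxs⟩ := hx
    obtain ⟨g, hg, hg0, hgsum⟩ := exists_repr s (fun b => b ≠ a) hxs
    have hga : g a = 0 := hg0 a (not_not_intro rfl)
    have hsum0 : ∑ b, Function.update g a (-x) b = 0 := by
      rw [Finset.sum_update_of_mem (Finset.mem_univ a)]
      have : ∑ b ∈ Finset.univ \ {a}, g b = x := by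
        rw [← hgsum]
        exact Finset.sum_subset (Finset.sdiff_subset) (fun b _ hb => by
          have : b = a := by
            by_contra hne
            exact hb (Finset.mem_sdiff.mpr ⟨Finset.mem_univ _, by simpa using hne⟩)
          rw [this]; exact hga)
      rw [this, neg_add_cancel]
    have hmem : ∀ b, Function.update g a (-x) b ∈ s b := by
      intro b
      rcases eq_or_ne b a with rfl | hne
      · rw [Function.update_self]; exact neg_mem hxa
      · rw [Function.update_of_ne hne]; exact hg b
    have := sum_zero_of_disjoint toLinearExtension (fun _ _ h => h) s hd Finset.univ
      (Function.update g a (-x)) hmem hsum0 a (Finset.mem_univ _)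
    rw [Function.update_self, neg_eq_zero] at this
    rw [this]; exact zero_mem _
end

section
/- Let 𝒜 be a finite partially ordered set, V a vector space over a field K, and W : 𝒜 → Submodule K V a monotone map. Then W satisfies the intersection property (I) if and only if W satisfies condition (C). -/
/-- For a finite poset `𝒜`, a monotone `W : 𝒜 → Submodule K V`
satisfies the intersection property (I) iff it satisfies condition (C). -/
theorem stmt_3 {K V A : Type*} [Field K] [AddCommGroup V] [Module K V]
    [PartialOrder A] [Finite A]
    (W : A → Submodule K V) (hW : Monotone W) :
    (∀ B C : Set A, IsLowerSet B → IsLowerSet C →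
        (⨆ b ∈ B, W b) ⊓ (⨆ c ∈ C, W c) ≤ ⨆ a ∈ B ∩ C, W a) ↔
      (∀ a : A, W a ⊓ (⨆ b, ⨆ _ : ¬ a ≤ b, W b) ≤ ⨆ b, ⨆ _ : b < a, W b) := by
  constructor
  · intro hI a
    have hB : IsLowerSet {c : A | c ≤ a} := fun x y hyx hx => le_trans hyx hx
    have hC : IsLowerSet {c : A | ¬ a ≤ c} := fun x y hyx hx hay => hx (hay.trans hyx)
    have h := hI _ _ hB hC
    refine le_trans (inf_le_inf ?_ ?_) (le_trans h ?_)
    · exact le_iSup₂_of_le a le_rfl le_rfl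
    · exact iSup₂_le fun b hb => le_iSup₂ (f := fun b (_ : b ∈ {c : A | ¬ a ≤ c}) => W b) b hb
    · refine iSup₂_le fun b hb => ?_
      exact le_iSup₂ (f := fun b (_ : b < a) => W b) b (lt_of_le_not_ge hb.1 hb.2)
  · intro hc
    suffices key : ∀ n (B C : Set A), B.ncard ≤ n → IsLowerSet B → IsLowerSet C →
        (⨆ b ∈ B, W b) ⊓ (⨆ c ∈ C, W c) ≤ ⨆ a ∈ B ∩ C, W a by
      intro B C hB hC; exact key B.ncard B C le_rfl hB hC
    intro n
    induction n with
    | zero =>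
      intro B C hn hB hC
      have hBe : B = ∅ := (Set.ncard_eq_zero (Set.toFinite B)).mp (Nat.le_zero.mp hn)
      subst hBe
      simp
    | succ n ih =>
      intro B C hn hB hC
      by_cases hBC : B ⊆ C
      · rw [Set.inter_eq_left.mpr hBC]; exact inf_le_left
      · have hne : (B \ C).Nonempty := Set.diff_nonempty.mpr hBC
        obtain ⟨a, haBC, hmax⟩ :=
          Set.Finite.exists_maximalFor id (B \ C) (Set.toFinite _) hne
        obtain ⟨haB, haC⟩ := haBC
        set B' := B \ {a} with hB'
        -- every element of B' or C is not ≥ a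
        have hnotC : ∀ b ∈ C, ¬ a ≤ b := fun b hb hab => haC (hC hab hb)
        have hnotB' : ∀ b ∈ B', ¬ a ≤ b := by
          intro b hb hab
          rcases hb with ⟨hbB, hba⟩
          by_cases hbC : b ∈ C
          · exact haC (hC hab hbC)
          · exact hba (Set.mem_singleton_iff.mpr (le_antisymm (hmax (j := b) ⟨hbB, hbC⟩ hab) hab))
        have hB'low : IsLowerSet B' := by
          intro x y hyx hx
          refine ⟨hB hyx hx.1, ?_⟩
          intro hy
          rw [Set.mem_singleton_iff] at hy
          subst hy
          exact hnotB' x hx hyx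
        have hsplit : (⨆ b ∈ B, W b) = W a ⊔ ⨆ b ∈ B', W b := by
          have : B = insert a B' := by
            rw [hB', Set.insert_diff_singleton, Set.insert_eq_self.mpr haB]
          rw [this, iSup_insert]
        have hT : (⨆ c ∈ C, W c) ⊔ (⨆ b ∈ B', W b) ≤ ⨆ b, ⨆ _ : ¬ a ≤ b, W b := by
          refine sup_le (iSup₂_le fun b hb => ?_) (iSup₂_le fun b hb => ?_)
          · exact le_iSup₂ (f := fun b (_ : ¬ a ≤ b) => W b) b (hnotC b hb)
          · exact le_iSup₂ (f := fun b (_ : ¬ a ≤ b) => W b) b (hnotB' b hb)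
        have hlt : (⨆ b, ⨆ _ : b < a, W b) ≤ ⨆ b ∈ B', W b := by
          refine iSup₂_le fun b hb => ?_
          exact le_iSup₂ (f := fun b (_ : b ∈ B') => W b) b ⟨hB hb.le haB, hb.ne⟩
        have hstep : (⨆ b ∈ B, W b) ⊓ (⨆ c ∈ C, W c) ≤
            (⨆ b ∈ B', W b) ⊓ (⨆ c ∈ C, W c) := by
          intro v hv
          obtain ⟨hvB, hvC⟩ := hv
          have hvB2 : v ∈ W a ⊔ ⨆ b ∈ B', W b := hsplit ▸ hvB
          rw [Submodule.mem_sup] at hvB2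
          obtain ⟨w, hw, v', hv', rfl⟩ := hvB2
          have hwmem : w ∈ W a ⊓ ⨆ b, ⨆ _ : ¬ a ≤ b, W b := by
            refine ⟨hw, ?_⟩
            have : w = (w + v') - v' := by abel
            rw [this]
            exact Submodule.sub_mem _ (hT (le_sup_left (b := ⨆ b ∈ B', W b) hvC))
              (hT (le_sup_right (a := ⨆ c ∈ C, W c) hv'))
          refine ⟨Submodule.add_mem _ (hlt (hc a hwmem)) hv', hvC⟩
        refine le_trans hstep (le_trans (ih B' C ?_ hB'low hC) ?_)
        · have h1 := Set.ncard_diff_singleton_lt_of_mem haB (Set.toFinite B)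
          rw [← hB'] at h1
          omega
        · have : B' ∩ C = B ∩ C := by
            ext x
            simp only [hB', Set.mem_inter_iff, Set.mem_diff, Set.mem_singleton_iff]
            constructor
            · rintro ⟨⟨h1, _⟩, h2⟩; exact ⟨h1, h2⟩
            · rintro ⟨h1, h2⟩
              exact ⟨⟨h1, fun h => haC (h ▸ h2)⟩, h2⟩
          rw [this]
end

section
/- Let 𝒜 be a partially ordered set, V a vector space over a field K, and W : 𝒜 → Submodule K V a monotone map satisfying condition (C). Then every pre-decomposition s : 𝒜 → Submodule K V of W is an independent family, i.e. for every a ∈ 𝒜, s a ⊓ (⨆_{b ∈ 𝒜, b ≠ a} s b) = ⊥. -/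
/-- If a monotone `W : 𝒜 → Submodule K V` satisfies condition (C),
then every pre-decomposition of `W` is an independent family. -/
theorem stmt_5 {K V A : Type*} [Field K] [AddCommGroup V] [Module K V]
    [PartialOrder A]
    (W : A → Submodule K V) (hW : Monotone W)
    (hC : ∀ a : A, W a ⊓ (⨆ b, ⨆ _ : ¬ a ≤ b, W b) ≤ ⨆ b, ⨆ _ : b < a, W b)
    (s : A → Submodule K V)
    (hs : ∀ a : A, s a ≤ W a ∧ s a ⊓ (⨆ b, ⨆ _ : b < a, W b) = ⊥ ∧
      s a ⊔ (⨆ b, ⨆ _ : b < a, W b) = W a) :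
    ∀ a : A, s a ⊓ (⨆ b, ⨆ _ : b ≠ a, s b) = ⊥ := by
  classical
  -- Key lemma: any finitely supported family with values in `s b` summing to 0 is 0.
  have key : ∀ f : A →₀ V, (∀ b, f b ∈ s b) → (f.sum fun _ v => v) = 0 → f = 0 := by
    intro f hf hsum
    by_contra hne
    have hsupp : f.support.Nonempty := Finsupp.support_nonempty_iff.mpr hne
    obtain ⟨m, hm, hmax⟩ := f.support.exists_maximal hsupp
    -- f m = - (sum over support.erase m)
    have hsum' : f m + ∑ b ∈ f.support.erase m, f b = 0 := by
      rw [Finsupp.sum, ← Finset.add_sum_erase _ _ hm] at hsum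
      exact hsum
    have hmem : f m ∈ W m ⊓ (⨆ b, ⨆ _ : ¬ m ≤ b, W b) := by
      refine ⟨(hs m).1 (hf m), ?_⟩
      have : f m = - ∑ b ∈ f.support.erase m, f b := by linear_combination (norm := abel) hsum'
      rw [this]
      refine neg_mem (Submodule.sum_mem _ fun b hb => ?_)
      have hbm : b ≠ m := (Finset.mem_erase.mp hb).1
      have hbs : b ∈ f.support := (Finset.mem_erase.mp hb).2
      have hnle : ¬ m ≤ b := fun hle => hbm (le_antisymm (hmax hbs hle) hle)
      exact Submodule.mem_iSup_of_mem b (Submodule.mem_iSup_of_mem hnle ((hs b).1 (hf b)))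
    have : f m ∈ s m ⊓ (⨆ b, ⨆ _ : b < m, W b) := ⟨hf m, hC m hmem⟩
    rw [(hs m).2.1] at this
    exact Finsupp.mem_support_iff.mp hm this
  intro a
  rw [eq_bot_iff]
  rintro x ⟨hxa, hxsup⟩
  obtain ⟨f, hf, hfsum⟩ := (Submodule.mem_iSup_iff_exists_finsupp _ _).mp hxsup
  have hfa : f a = 0 := by
    have := hf a
    simpa using this
  set g : A →₀ V := f - Finsupp.single a x with hg
  have hgmem : ∀ b, g b ∈ s b := by
    intro b
    by_cases hb : b = a
    · subst hb
      have hga : g b = -x := by simp [hg, hfa]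
      rw [hga]
      exact neg_mem hxa
    · have h1 : g b = f b := by
        simp [hg, Finsupp.single_eq_of_ne' (fun h => hb h.symm)]
      have h2 := hf b
      rw [iSup_pos hb] at h2
      rw [h1]; exact h2
  have hgsum : (g.sum fun _ v => v) = 0 := by
    have h1 : (g.sum fun _ v => v) = (f.sum fun _ v => v) - ((Finsupp.single a x).sum fun _ v => v) := by
      rw [hg]
      exact Finsupp.sum_sub_index (fun _ _ _ => rfl)
    rw [h1, hfsum, Finsupp.sum_single_index rfl, sub_self]
  have := key g hgmem hgsum
  have hga : g a = 0 := by rw [this]; rfl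
  have : -x = 0 := by simpa [hg, hfa] using hga
  simpa using neg_eq_zero.mp this
end

section
/- Let 𝒜 be a well-founded partially ordered set, V a vector space over a field K, and W : 𝒜 → Submodule K V a monotone map. Then W is decomposable if and only if W satisfies condition (C). -/
section Aux

variable {K V A : Type*} [Field K] [AddCommGroup V] [Module K V]
    [PartialOrder A] [WellFoundedLT A]

set_option linter.unusedSectionVars false in
/-- Forward direction helper. -/
theorem aux_fwd (W : A → Submodule K V) (_hW : Monotone W)
    (s : A → Submodule K V)
    (hind : ∀ a : A, s a ⊓ (⨆ b, ⨆ _ : b ≠ a, s b) = ⊥)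
    (hdec : ∀ a : A, W a = ⨆ b, ⨆ _ : b ≤ a, s b) :
    ∀ a : A, W a ⊓ (⨆ b, ⨆ _ : ¬ a ≤ b, W b) ≤ ⨆ b, ⨆ _ : b < a, W b := by
  intro a
  have hsW : ∀ c : A, s c ≤ W c := by
    intro c
    rw [hdec c]
    exact le_iSup_of_le c (le_iSup_of_le le_rfl le_rfl)
  set y : Submodule K V := ⨆ b, ⨆ _ : b < a, s b with hy
  set z : Submodule K V := ⨆ b, ⨆ _ : ¬ a ≤ b, s b with hz
  have hyz : y ≤ z := by
    refine iSup₂_le fun b hb => ?_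
    exact le_iSup_of_le b (le_iSup_of_le (fun h => absurd (le_antisymm h hb.le) hb.ne') le_rfl)
  have hWa : W a = s a ⊔ y := by
    rw [hdec a]
    apply le_antisymm
    · refine iSup₂_le fun b hb => ?_
      rcases eq_or_lt_of_le hb with rfl | hlt
      · exact le_sup_left
      · exact le_sup_of_le_right (le_iSup_of_le b (le_iSup_of_le hlt le_rfl))
    · refine sup_le (le_iSup_of_le a (le_iSup_of_le le_rfl le_rfl)) ?_
      exact iSup₂_le fun b hb => le_iSup_of_le b (le_iSup_of_le hb.le le_rfl)
  have hWz : (⨆ b, ⨆ _ : ¬ a ≤ b, W b) ≤ z := by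
    refine iSup₂_le fun b hb => ?_
    rw [hdec b]
    refine iSup₂_le fun c hc => ?_
    exact le_iSup_of_le c (le_iSup_of_le (fun h => hb (h.trans hc)) le_rfl)
  have key : W a ⊓ (⨆ b, ⨆ _ : ¬ a ≤ b, W b) ≤ y := by
    calc W a ⊓ (⨆ b, ⨆ _ : ¬ a ≤ b, W b) ≤ (y ⊔ s a) ⊓ z := by
          rw [hWa, sup_comm]; exact inf_le_inf le_rfl hWz
      _ = y ⊔ s a ⊓ z := sup_inf_assoc_of_le _ hyz
      _ ≤ y ⊔ ⊥ := by
          refine sup_le_sup_left ?_ y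
          rw [← hind a]
          refine inf_le_inf le_rfl ?_
          refine iSup₂_le fun b hb => ?_
          exact le_iSup_of_le b (le_iSup_of_le (fun h => hb (h ▸ le_rfl)) le_rfl)
      _ = y := sup_bot_eq y
  refine key.trans (iSup₂_le fun b hb => le_iSup_of_le b (le_iSup_of_le hb (hsW b)))

end Aux

/-- For a well-founded poset `𝒜`, a monotone `W : 𝒜 → Submodule K V`
is decomposable iff it satisfies condition (C). -/
theorem stmt_7 {K V A : Type*} [Field K] [AddCommGroup V] [Module K V]
    [PartialOrder A] [WellFoundedLT A]
    (W : A → Submodule K V) (hW : Monotone W) :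
    (∃ s : A → Submodule K V,
        (∀ a : A, s a ⊓ (⨆ b, ⨆ _ : b ≠ a, s b) = ⊥) ∧
        (∀ a : A, W a = ⨆ b, ⨆ _ : b ≤ a, s b)) ↔
      (∀ a : A, W a ⊓ (⨆ b, ⨆ _ : ¬ a ≤ b, W b) ≤ ⨆ b, ⨆ _ : b < a, W b) := by
  classical
  constructor
  · rintro ⟨s, hind, hdec⟩
    exact aux_fwd W hW s hind hdec
  · intro hC
    -- construction of the decomposition
    set U : A → Submodule K V := fun a => ⨆ b, ⨆ _ : b < a, W b with hU
    have hUW : ∀ a, U a ≤ W a := fun a => iSup₂_le fun b hb => hW hb.le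
    choose q hq using fun a => Submodule.exists_isCompl (U a)
    set s : A → Submodule K V := fun a => q a ⊓ W a with hs
    have hsW : ∀ a, s a ≤ W a := fun a => inf_le_right
    have hsU : ∀ a, s a ⊓ U a = ⊥ := by
      intro a
      rw [← le_bot_iff, ← (hq a).symm.inf_eq_bot]
      exact inf_le_inf inf_le_left le_rfl
    have hsup : ∀ a, s a ⊔ U a = W a := by
      intro a
      show q a ⊓ W a ⊔ U a = W a
      calc q a ⊓ W a ⊔ U a = W a ⊓ q a ⊔ U a := by rw [inf_comm]
        _ = W a ⊓ (q a ⊔ U a) := inf_sup_assoc_of_le _ (hUW a)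
        _ = W a ⊓ (U a ⊔ q a) := by rw [sup_comm]
        _ = W a := by rw [(hq a).sup_eq_top, inf_top_eq]
    -- the decomposition property, by well-founded induction
    have hdec : ∀ a, W a = ⨆ b, ⨆ _ : b ≤ a, s b := by
      intro a
      induction a using WellFoundedLT.induction with
      | _ a ih =>
        have hUa : U a = ⨆ b, ⨆ _ : b < a, s b := by
          apply le_antisymm
          · refine iSup₂_le fun b hb => ?_
            rw [ih b hb]
            exact iSup₂_le fun c hc => le_iSup_of_le c
              (le_iSup_of_le (lt_of_le_of_lt hc hb) le_rfl)
          · exact iSup₂_le fun b hb =>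
              le_iSup_of_le b (le_iSup_of_le hb (hsW b))
        rw [← hsup a, hUa]
        apply le_antisymm
        · refine sup_le (le_iSup_of_le a (le_iSup_of_le le_rfl le_rfl)) ?_
          exact iSup₂_le fun b hb => le_iSup_of_le b (le_iSup_of_le hb.le le_rfl)
        · refine iSup₂_le fun b hb => ?_
          rcases eq_or_lt_of_le hb with rfl | hlt
          · exact le_sup_left
          · exact le_sup_of_le_right (le_iSup_of_le b (le_iSup_of_le hlt le_rfl))
    -- key consequence of condition (C)
    have hkey : ∀ c : A, ∀ X : Submodule K V,
        X ≤ (⨆ b, ⨆ _ : ¬ c ≤ b, W b) → s c ⊓ X = ⊥ := by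
      intro c X hX
      rw [← le_bot_iff, ← hsU c]
      refine le_inf inf_le_left ?_
      exact le_trans (inf_le_inf (hsW c) hX) (hC c)
    -- finite independence
    have hfin : ∀ T : Finset A, ∀ a ∉ T, s a ⊓ (⨆ b ∈ T, s b) = ⊥ := by
      intro T
      induction T using Finset.strongInduction with
      | _ T ih =>
        intro a haT
        rcases T.eq_empty_or_nonempty with rfl | hTne
        · simp
        · have hSne : ((insert a T : Finset A) : Set A).Nonempty := by
            simp [Finset.insert_nonempty]
          obtain ⟨c, hcS, hmax⟩ : ∃ c ∈ ((insert a T : Finset A) : Set A),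
              ∀ b ∈ ((insert a T : Finset A) : Set A), id c ≤ id b → id c = id b := by
            obtain ⟨c, hc, hm⟩ := Set.Finite.exists_maximalFor id
              ((insert a T : Finset A) : Set A) (Finset.finite_toSet _) hSne
            exact ⟨c, hc, fun b hb h => le_antisymm h (hm hb h)⟩
          simp only [id] at hmax
          have hcS' : c ∈ insert a T := by exact_mod_cast hcS
          rcases eq_or_ne c a with rfl | hca
          · -- a is maximal: all b ∈ T satisfy ¬ a ≤ b
            refine hkey c _ ?_
            refine iSup₂_le fun b hb => ?_
            refine le_trans (hsW b) (le_iSup_of_le b (le_iSup_of_le (fun h => ?_) le_rfl))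
            have : c = b := hmax b (by exact_mod_cast Finset.mem_insert_of_mem hb) h
            exact haT (this ▸ hb)
          · -- c ∈ T is maximal
            have hcT : c ∈ T := by
              rcases Finset.mem_insert.mp hcS' with h | h
              · exact absurd h hca
              · exact h
            set Y : Submodule K V := ⨆ b ∈ T.erase c, s b with hY
            have hnc : ∀ b ∈ insert a T, b ≠ c → ¬ c ≤ b := by
              intro b hb hbc h
              exact hbc ((hmax b (by exact_mod_cast hb) h).symm)
            have h1 : s c ⊓ (s a ⊔ Y) = ⊥ := by
              refine hkey c _ ?_
              refine sup_le ?_ ?_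
              · exact le_trans (hsW a) (le_iSup_of_le a
                  (le_iSup_of_le (hnc a (Finset.mem_insert_self a T) (Ne.symm hca)) le_rfl))
              · refine iSup₂_le fun b hb => ?_
                have hbT := Finset.mem_of_mem_erase hb
                have hbc := Finset.ne_of_mem_erase hb
                exact le_trans (hsW b) (le_iSup_of_le b
                  (le_iSup_of_le (hnc b (Finset.mem_insert_of_mem hbT) hbc) le_rfl))
            have hIH : s a ⊓ Y = ⊥ :=
              ih (T.erase c) (Finset.erase_ssubset hcT) a
                (fun h => haT (Finset.mem_of_mem_erase h))
            have hTY : (⨆ b ∈ T, s b) = s c ⊔ Y := by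
              conv_lhs => rw [← Finset.insert_erase hcT]
              rw [Finset.iSup_insert]
            rw [hTY, ← le_bot_iff, ← hIH]
            refine le_inf inf_le_left ?_
            calc s a ⊓ (s c ⊔ Y) ≤ (s a ⊔ Y) ⊓ (s c ⊔ Y) := inf_le_inf le_sup_left le_rfl
              _ = (Y ⊔ s c) ⊓ (s a ⊔ Y) := by rw [sup_comm (s c) Y, inf_comm]
              _ = Y ⊔ s c ⊓ (s a ⊔ Y) := sup_inf_assoc_of_le _ le_sup_right
              _ = Y := by rw [h1, sup_bot_eq]
    -- full independence
    have hind : ∀ a, s a ⊓ (⨆ b, ⨆ _ : b ≠ a, s b) = ⊥ := by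
      intro a
      rw [eq_bot_iff]
      rintro x hx
      obtain ⟨hx1, hx2⟩ := Submodule.mem_inf.mp hx
      rw [iSup_subtype'] at hx2
      obtain ⟨T, hT⟩ := Submodule.mem_iSup_iff_exists_finset.mp hx2
      have haT : a ∉ T.image Subtype.val := by
        simp only [Finset.mem_image]
        rintro ⟨⟨b, hb⟩, -, h⟩
        exact hb h
      have hxT : x ∈ (⨆ b ∈ T.image Subtype.val, s b) := by
        refine (iSup₂_le fun b hb => ?_ : (⨆ b ∈ T, s b.1) ≤ _) hT
        exact le_iSup_of_le b.1 (le_iSup_of_le (Finset.mem_image_of_mem _ hb) le_rfl)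
      rw [← hfin (T.image Subtype.val) a haT]
      exact Submodule.mem_inf.mpr ⟨hx1, hxT⟩
    exact ⟨s, hind, hdec⟩
end

section
/- Let 𝒜 be a well-founded partially ordered set, V a vector space over a field K, and W : 𝒜 → Submodule K V a monotone map. Then W is decomposable if and only if W satisfies the intersection property (I). -/
/-- For a well-founded poset `𝒜`, a monotone `W : 𝒜 → Submodule K V`
is decomposable iff it satisfies the intersection property (I). -/
theorem stmt_8 {K V A : Type*} [Field K] [AddCommGroup V] [Module K V]
    [PartialOrder A] [WellFoundedLT A]
    (W : A → Submodule K V) (hW : Monotone W) :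
    (∃ s : A → Submodule K V,
        (∀ a : A, s a ⊓ (⨆ b, ⨆ _ : b ≠ a, s b) = ⊥) ∧
        (∀ a : A, W a = ⨆ b, ⨆ _ : b ≤ a, s b)) ↔
      (∀ B C : Set A, IsLowerSet B → IsLowerSet C →
        (⨆ b ∈ B, W b) ⊓ (⨆ c ∈ C, W c) ≤ ⨆ a ∈ B ∩ C, W a) := by
  classical
  constructor
  · -- decomposable → intersection property
    rintro ⟨s, hind, hsum⟩ B C hB hC
    have hsle : ∀ a, s a ≤ W a := fun a => by
      rw [hsum a]; exact le_iSup₂ (f := fun b (_ : b ≤ a) => s b) a le_rfl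
    have hIndep : iSupIndep s := fun a => disjoint_iff.mpr (hind a)
    have hinj := hIndep.dfinsupp_lsum_injective
    have hWB : ∀ (D : Set A), IsLowerSet D → (⨆ b ∈ D, W b) = ⨆ b ∈ D, s b := by
      intro D hD
      refine le_antisymm (iSup₂_le fun b hb => ?_) (iSup₂_le fun b hb => (hsle b).trans
        (le_iSup₂ (f := fun b (_ : b ∈ D) => W b) b hb))
      rw [hsum b]
      exact iSup₂_le fun c hc => le_iSup₂ (f := fun b (_ : b ∈ D) => s b) c (hD hc hb)
    rw [hWB B hB, hWB C hC]
    intro x hx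
    obtain ⟨hxB, hxC⟩ := Submodule.mem_inf.mp hx
    rw [Submodule.mem_biSup_iff_exists_dfinsupp] at hxB hxC
    obtain ⟨f, hf⟩ := hxB
    obtain ⟨g, hg⟩ := hxC
    have hfg : f.filter (· ∈ B) = g.filter (· ∈ C) := hinj (hf.trans hg.symm)
    have hmem : x ∈ ⨆ a ∈ B ∩ C, s a := by
      rw [Submodule.mem_biSup_iff_exists_dfinsupp]
      refine ⟨f, ?_⟩
      have hff : f.filter (· ∈ B ∩ C) = g.filter (· ∈ C) := by
        ext i
        have h1 := DFunLike.congr_fun hfg i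
        simp only [DFinsupp.filter_apply] at h1 ⊢
        by_cases hiB : i ∈ B <;> by_cases hiC : i ∈ C <;>
          simp_all [Set.mem_inter_iff]
      rw [hff, hg]
    refine (iSup₂_le fun a ha => ?_ : (⨆ a ∈ B ∩ C, s a) ≤ ⨆ a ∈ B ∩ C, W a) hmem
    exact (hsle a).trans (le_iSup₂ (f := fun a (_ : a ∈ B ∩ C) => W a) a ha)
  · -- intersection property → decomposable
    intro hI
    set Wlt : A → Submodule K V := fun a => ⨆ b, ⨆ _ : b < a, W b with hWlt_def
    have hWlt_le : ∀ a, Wlt a ≤ W a := fun a => iSup₂_le fun b hb => hW hb.le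
    have hchoice : ∀ a : A, ∃ sa : Submodule K V,
        sa ≤ W a ∧ sa ⊓ Wlt a = ⊥ ∧ sa ⊔ Wlt a = W a := by
      intro a
      obtain ⟨q, hq⟩ := Submodule.exists_isCompl ((Wlt a).comap (W a).subtype)
      have hmle : q.map (W a).subtype ≤ W a := Submodule.map_subtype_le _ _
      have h1 : q.map (W a).subtype ⊓ (W a ⊓ Wlt a) = ⊥ := by
        rw [← Submodule.map_comap_subtype (W a) (Wlt a),
          ← Submodule.map_inf _ (Submodule.injective_subtype _), hq.symm.inf_eq_bot,
          Submodule.map_bot]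
      have h2 : q.map (W a).subtype ⊔ (W a ⊓ Wlt a) = W a := by
        rw [← Submodule.map_comap_subtype (W a) (Wlt a),
          ← Submodule.map_sup, hq.symm.sup_eq_top, Submodule.map_top, Submodule.range_subtype]
      refine ⟨q.map (W a).subtype, hmle, ?_, ?_⟩
      · refine le_bot_iff.mp (le_trans (le_inf inf_le_left
          (le_inf (inf_le_left.trans hmle) inf_le_right)) h1.le)
      · refine le_antisymm (sup_le hmle (hWlt_le a)) ?_
        conv_lhs => rw [← h2]
        exact sup_le_sup_left inf_le_right _
    choose s hsle hsinf hssup using hchoice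
    have key : ∀ (B : Set A), IsLowerSet B → ∀ a ∉ B, s a ⊓ (⨆ b ∈ B, W b) = ⊥ := by
      intro B hB a ha
      have hWa : W a = ⨆ b ∈ Set.Iic a, W b :=
        le_antisymm (le_iSup₂ (f := fun b (_ : b ∈ Set.Iic a) => W b) a le_rfl)
          (iSup₂_le fun b hb => hW hb)
      have hle : s a ⊓ (⨆ b ∈ B, W b) ≤ Wlt a := by
        calc s a ⊓ (⨆ b ∈ B, W b) ≤ W a ⊓ (⨆ b ∈ B, W b) :=
              inf_le_inf_right _ (hsle a)
          _ = (⨆ b ∈ Set.Iic a, W b) ⊓ (⨆ b ∈ B, W b) := by rw [← hWa]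
          _ ≤ ⨆ b ∈ Set.Iic a ∩ B, W b := hI _ _ (isLowerSet_Iic a) hB
          _ ≤ Wlt a := by
              refine iSup₂_le fun b hb => ?_
              have hba : b < a :=
                lt_of_le_of_ne hb.1 (fun h => ha (h ▸ hb.2))
              exact le_iSup₂ (f := fun b (_ : b < a) => W b) b hba
      exact le_bot_iff.mp (le_trans (le_inf inf_le_left hle) (hsinf a).le)
    have hsW : ∀ a, s a ≤ W a := hsle
    refine ⟨s, ?_, ?_⟩
    · -- independence
      have claim : ∀ F : Finset A, ∀ g : A → V, (∀ b ∈ F, g b ∈ s b) →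
          ∑ b ∈ F, g b = 0 → ∀ b ∈ F, g b = 0 := by
        intro F
        induction F using Finset.strongInduction with
        | _ F IH =>
          intro g hg hsum0 b hb
          obtain ⟨m, hmF, hmax⟩ := F.exists_maximal ⟨b, hb⟩
          set B : Set A := {c | ∃ x ∈ F.erase m, c ≤ x} with hBdef
          have hBl : IsLowerSet B := by
            rintro u v hvu ⟨x, hx, hux⟩
            exact ⟨x, hx, hvu.trans hux⟩
          have hmB : m ∉ B := by
            rintro ⟨x, hx, hmx⟩
            exact (Finset.ne_of_mem_erase hx) (le_antisymm (hmax (Finset.mem_of_mem_erase hx) hmx) hmx)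
          have hgm : g m ∈ s m ⊓ (⨆ c ∈ B, W c) := by
            refine Submodule.mem_inf.mpr ⟨hg m hmF, ?_⟩
            have hmeq : g m = -∑ c ∈ F.erase m, g c :=
              eq_neg_of_add_eq_zero_left (by rw [Finset.add_sum_erase F g hmF]; exact hsum0)
            rw [hmeq]
            refine neg_mem (Submodule.sum_mem _ fun c hc => ?_)
            have : W c ≤ ⨆ c ∈ B, W c :=
              le_iSup₂ (f := fun c (_ : c ∈ B) => W c) c ⟨c, hc, le_rfl⟩
            exact this ((hsW c) (hg c (Finset.mem_of_mem_erase hc)))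
          rw [key B hBl m hmB] at hgm
          have hgm0 : g m = 0 := hgm
          by_cases hbm : b = m
          · rw [hbm]; exact hgm0
          · have hsum' : ∑ c ∈ F.erase m, g c = 0 := by
              have := Finset.add_sum_erase F g hmF
              rw [hgm0, zero_add] at this
              rw [this]; exact hsum0
            exact IH (F.erase m) (Finset.erase_ssubset hmF) g
              (fun c hc => hg c (Finset.mem_of_mem_erase hc)) hsum' b
              (Finset.mem_erase.mpr ⟨hbm, hb⟩)
      intro a
      rw [eq_bot_iff]
      intro x hx
      obtain ⟨hxa, hxr⟩ := Submodule.mem_inf.mp hx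
      rw [Submodule.mem_iSup_iff_exists_finsupp] at hxr
      obtain ⟨f, hf, hfsum⟩ := hxr
      have hfa : f a = 0 := by
        have := hf a
        rw [iSup_neg (not_not_intro rfl)] at this
        simpa using this
      have hfb : ∀ c ∈ f.support, f c ∈ s c := by
        intro c hc
        have hca : c ≠ a := fun h => (Finsupp.mem_support_iff.mp hc) (h ▸ hfa)
        have := hf c
        rwa [iSup_pos hca] at this
      have hanots : a ∉ f.support := by simp [Finsupp.mem_support_iff, hfa]
      set g : A → V := Function.update (⇑f) a (-x) with hgdef
      have hsum0 : ∑ c ∈ insert a f.support, g c = 0 := by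
        rw [Finset.sum_insert hanots]
        have h1 : ∀ c ∈ f.support, g c = f c := fun c hc =>
          Function.update_of_ne (fun h => hanots (by rw [← h]; exact hc)) _ _
        rw [Finset.sum_congr rfl h1, hgdef]
        have h2 : ∑ c ∈ f.support, f c = x := hfsum
        rw [h2, Function.update_self, neg_add_cancel]
      have hga : g a = 0 := by
        refine claim (insert a f.support) g ?_ hsum0 a (Finset.mem_insert_self a _)
        intro c hc
        rcases Finset.mem_insert.mp hc with h | h
        · rw [h, hgdef, Function.update_self]; exact neg_mem hxa
        · rw [hgdef, Function.update_of_ne (fun he => hanots (by rw [← he]; exact h)) _ _]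
          exact hfb c h
      have : -x = 0 := by rwa [hgdef, Function.update_self] at hga
      simpa using neg_eq_zero.mp this
    · -- sup property
      intro a
      induction a using WellFoundedLT.induction with
      | _ a IH =>
        refine le_antisymm ?_ (iSup₂_le fun b hb => ?_)
        · have h1 : W a = s a ⊔ Wlt a := (hssup a).symm
          rw [h1]
          refine sup_le (le_iSup₂ (f := fun b (_ : b ≤ a) => s b) a le_rfl) ?_
          refine iSup₂_le fun b hb => ?_
          rw [IH b hb]
          exact iSup₂_le fun c hc =>
            le_iSup₂ (f := fun b (_ : b ≤ a) => s b) c (hc.trans hb.le)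
        · exact le_trans (by
            calc s b ≤ s b ⊔ Wlt b := le_sup_left
              _ = W b := hssup b) (hW hb)
end

section
/- Let 𝒜 be a well-founded partially ordered set, V a vector space over a field K, and W : 𝒜 → Submodule K V a monotone map. Then W satisfies the intersection property (I) if and only if W satisfies condition (C). -/
namespace Stmt9

variable {α : Type*} [Preorder α]

/-- One step of the Dershowitz–Manna order: replace one element by a
multiset of strictly smaller elements. -/
def OneStep (N M : Multiset α) : Prop :=
  ∃ a M₀ G, (∀ g ∈ G, g < a) ∧ M = a ::ₘ M₀ ∧ N = G + M₀

lemma acc_add :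
    ∀ G : Multiset α,
      (∀ g ∈ G, ∀ M, Acc (OneStep (α := α)) M → Acc OneStep (g ::ₘ M)) →
      ∀ M, Acc (OneStep (α := α)) M → Acc OneStep (G + M) := by
  intro G
  induction G using Multiset.induction with
  | empty => intro _ M hM; simpa using hM
  | cons g G ih =>
      intro hG M hM
      rw [Multiset.cons_add]
      exact hG g (Multiset.mem_cons_self _ _) _
        (ih (fun g hg => hG g (Multiset.mem_cons_of_mem hg)) M hM)

lemma acc_cons (h : WellFounded ((· < ·) : α → α → Prop)) :
    ∀ a : α, ∀ M, Acc (OneStep (α := α)) M → Acc OneStep (a ::ₘ M) := by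
  intro a
  induction a using h.induction with
  | _ a iha =>
    intro M hM
    induction hM with
    | intro M hM ihM =>
      constructor
      intro N hN
      obtain ⟨b, M₀, G, hG, hMeq, hNeq⟩ := hN
      rcases Multiset.cons_eq_cons.mp hMeq with ⟨rfl, rfl⟩ | ⟨hne, u, hu1, hu2⟩
      · subst hNeq
        exact acc_add G (fun g hg => iha g (hG g hg)) M (Acc.intro M hM)
      · subst hu1 hu2 hNeq
        rw [Multiset.add_cons]
        exact ihM (G + u) ⟨b, u, G, hG, rfl, rfl⟩

lemma oneStep_wf (h : WellFounded ((· < ·) : α → α → Prop)) :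
    WellFounded (OneStep (α := α)) := by
  constructor
  intro M
  induction M using Multiset.induction with
  | empty =>
      constructor
      intro N hN
      obtain ⟨a, M₀, G, -, hMeq, -⟩ := hN
      exact absurd hMeq.symm (Multiset.cons_ne_zero)
  | cons a M ih => exact acc_cons h a M ih

lemma biSup_le_biSup {β : Type*} {L : Type*} [CompleteLattice L] {p q : β → Prop}
    (f : β → L) (h : ∀ b, p b → q b) :
    (⨆ b, ⨆ _ : p b, f b) ≤ ⨆ b, ⨆ _ : q b, f b :=
  iSup₂_le fun b hb => le_iSup₂ (f := fun b _ => f b) b (h b hb)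

/-- The key induction for (C) → (I). -/
lemma key {K V A : Type*} [Field K] [AddCommGroup V] [Module K V]
    [PartialOrder A] [WellFoundedLT A]
    (W : A → Submodule K V) (hW : Monotone W)
    (hcond : ∀ a : A, W a ⊓ (⨆ b, ⨆ _ : ¬ a ≤ b, W b) ≤ ⨆ b, ⨆ _ : b < a, W b)
    (B C : Set A) (hB : IsLowerSet B) (hC : IsLowerSet C) :
    ∀ F : Multiset A, (∀ b ∈ F, b ∈ B) →
      ∀ x : V, x ∈ (⨆ b ∈ F, W b) → x ∈ (⨆ c ∈ C, W c) →
        x ∈ ⨆ a ∈ B ∩ C, W a := by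
  classical
  have hwf := oneStep_wf (wellFounded_lt (α := A))
  intro F
  induction F using hwf.induction with
  | _ F ihF =>
    intro hFB x hxF hxC
    by_cases hall : ∀ b ∈ F, b ∈ C
    · exact biSup_le_biSup (fun b => W b) (fun b hb => ⟨hFB b hb, hall b hb⟩) hxF
    · push_neg at hall
      obtain ⟨b₀, hb₀F, hb₀C⟩ := hall
      obtain ⟨a, haS, hamax⟩ : ∃ a ∈ F.toFinset.filter (fun b => b ∉ C),
          ∀ b ∈ F.toFinset.filter (fun b => b ∉ C), ¬ a < b := by
        obtain ⟨a, ha⟩ := Finset.exists_maximal (s := F.toFinset.filter (fun b => b ∉ C))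
          ⟨b₀, by simp [hb₀F, hb₀C]⟩
        exact ⟨a, ha.1, fun b hb hab => lt_irrefl a (lt_of_lt_of_le hab (ha.2 hb hab.le))⟩
      simp only [Finset.mem_filter, Multiset.mem_toFinset] at haS
      obtain ⟨haF, haC⟩ := haS
      set F₀ : Multiset A := F.filter (· ≠ a) with hF₀def
      have hF₀mem : ∀ b ∈ F₀, b ∈ F ∧ b ≠ a := fun b hb => Multiset.mem_filter.mp hb
      -- split the supremum over F
      have hsup : (⨆ b ∈ F, W b) = W a ⊔ ⨆ b ∈ F₀, W b := by
        apply le_antisymm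
        · refine iSup₂_le fun b hb => ?_
          rcases eq_or_ne b a with rfl | hba
          · exact le_sup_of_le_left le_rfl
          · exact le_sup_of_le_right
              (le_iSup₂ (f := fun b _ => W b) b (Multiset.mem_filter.mpr ⟨hb, hba⟩))
        · exact sup_le (le_iSup₂ (f := fun b _ => W b) a haF)
            (iSup₂_le fun b hb => le_iSup₂ (f := fun b _ => W b) b (hF₀mem b hb).1)
      rw [hsup] at hxF
      obtain ⟨y, hy, z, hz, hyz⟩ := Submodule.mem_sup.mp hxF
      -- every element of F₀ is not above a
      have hF₀nle : ∀ b ∈ F₀, ¬ a ≤ b := by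
        intro b hb hab
        obtain ⟨hbF, hba⟩ := hF₀mem b hb
        by_cases hbC : b ∈ C
        · exact haC (hC hab hbC)
        · exact hamax b (by simp [hbF, hbC]) (lt_of_le_of_ne hab (Ne.symm hba))
      have hCnle : ∀ c ∈ C, ¬ a ≤ c := fun c hc hac => haC (hC hac hc)
      have hz' : z ∈ ⨆ b, ⨆ _ : ¬ a ≤ b, W b :=
        biSup_le_biSup (fun b => W b) hF₀nle hz
      have hx' : x ∈ ⨆ b, ⨆ _ : ¬ a ≤ b, W b :=
        biSup_le_biSup (fun b => W b) hCnle hxC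
      have hy' : y ∈ ⨆ b, ⨆ _ : b < a, W b := by
        refine hcond a ⟨hy, ?_⟩
        have : y = x - z := by rw [← hyz]; abel
        rw [this]
        exact sub_mem hx' hz'
      -- extract a finite multiset of elements < a containing y
      obtain ⟨s, hs⟩ := Submodule.mem_iSup_iff_exists_finset.mp hy'
      set G : Multiset A := (s.filter (· < a)).val with hGdef
      have hGlt : ∀ g ∈ G, g < a := by
        intro g hg
        exact (Finset.mem_filter.mp (Finset.mem_val.mp hg)).2
      have hyG : y ∈ ⨆ b ∈ G, W b := by
        refine (iSup₂_le fun b hb => iSup_le fun hba => ?_ :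
          (⨆ b ∈ s, ⨆ _ : b < a, W b) ≤ ⨆ b ∈ G, W b) hs
        have hbG : b ∈ G := by
          have h1 : b ∈ s.filter (· < a) := Finset.mem_filter.mpr ⟨hb, hba⟩
          exact Finset.mem_val.mpr h1
        exact le_iSup₂ (f := fun b (_ : b ∈ G) => W b) b hbG
      -- the new multiset
      set N : Multiset A := G + F.erase a with hNdef
      have hstep : OneStep N F := ⟨a, F.erase a, G, hGlt, (Multiset.cons_erase haF).symm, rfl⟩
      have hNB : ∀ b ∈ N, b ∈ B := by
        intro b hb
        rcases Multiset.mem_add.mp hb with hbG | hbE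
        · exact hB (hGlt b hbG).le (hFB a haF)
        · exact hFB b (Multiset.mem_of_mem_erase hbE)
      have hxN : x ∈ ⨆ b ∈ N, W b := by
        rw [← hyz]
        refine add_mem ?_ ?_
        · exact biSup_le_biSup (fun b => W b)
            (fun b hb => Multiset.mem_add.mpr (Or.inl hb)) hyG
        · refine biSup_le_biSup (fun b => W b) (fun b hb => ?_) hz
          obtain ⟨hbF, hba⟩ := hF₀mem b hb
          exact Multiset.mem_add.mpr (Or.inr ((Multiset.mem_erase_of_ne hba).mpr hbF))
      exact ihF N hstep hNB x hxN hxC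

end Stmt9

/-- For a well-founded poset `𝒜`, a monotone `W : 𝒜 → Submodule K V`
satisfies the intersection property (I) iff it satisfies condition (C). -/
theorem stmt_9 {K V A : Type*} [Field K] [AddCommGroup V] [Module K V]
    [PartialOrder A] [WellFoundedLT A]
    (W : A → Submodule K V) (hW : Monotone W) :
    (∀ B C : Set A, IsLowerSet B → IsLowerSet C →
        (⨆ b ∈ B, W b) ⊓ (⨆ c ∈ C, W c) ≤ ⨆ a ∈ B ∩ C, W a) ↔
      (∀ a : A, W a ⊓ (⨆ b, ⨆ _ : ¬ a ≤ b, W b) ≤ ⨆ b, ⨆ _ : b < a, W b) := by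
  constructor
  · intro hI a
    have hBl : IsLowerSet {b : A | b ≤ a} := fun x y hyx hx => le_trans hyx hx
    have hCl : IsLowerSet {b : A | ¬ a ≤ b} := fun x y hyx hx hay => hx (hay.trans hyx)
    calc W a ⊓ (⨆ b, ⨆ _ : ¬ a ≤ b, W b)
        ≤ (⨆ b ∈ {b : A | b ≤ a}, W b) ⊓ (⨆ c ∈ {b : A | ¬ a ≤ b}, W c) :=
          inf_le_inf (le_iSup₂ (f := fun b (_ : b ∈ {b : A | b ≤ a}) => W b) a le_rfl) le_rfl
      _ ≤ ⨆ b ∈ ({b : A | b ≤ a} ∩ {b : A | ¬ a ≤ b}), W b := hI _ _ hBl hCl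
      _ ≤ ⨆ b, ⨆ _ : b < a, W b :=
          Stmt9.biSup_le_biSup (fun b => W b) (fun b hb => lt_of_le_not_ge hb.1 hb.2)
  · intro hcond B C hB hC
    intro x hx
    obtain ⟨hxB, hxC⟩ := hx
    obtain ⟨s, hs⟩ := Submodule.mem_iSup_iff_exists_finset.mp hxB
    classical
    set F : Multiset A := (s.filter (· ∈ B)).val with hFdef
    have hFB : ∀ b ∈ F, b ∈ B := by
      intro b hb
      exact (Finset.mem_filter.mp (Finset.mem_val.mp hb)).2
    have hxF : x ∈ ⨆ b ∈ F, W b := by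
      refine (iSup₂_le fun b hb => iSup_le fun hbB => ?_ :
        (⨆ b ∈ s, ⨆ _ : b ∈ B, W b) ≤ ⨆ b ∈ F, W b) hs
      have hbF : b ∈ F := by
        have h1 : b ∈ s.filter (· ∈ B) := Finset.mem_filter.mpr ⟨hb, hbB⟩
        exact Finset.mem_val.mpr h1
      exact le_iSup₂ (f := fun b (_ : b ∈ F) => W b) b hbF
    exact Stmt9.key W hW hcond B C hB hC F hFB x hxF hxC
end

section
/- Let 𝒜 be any partially ordered set, V a vector space over a field K, and W : 𝒜 → Submodule K V a monotone map. Then W satisfies the intersection property (I) if and only if W satisfies condition (C2): for every a ∈ 𝒜, every n ∈ ℕ and every finite family a_0, …, a_n of elements of 𝒜, W a ⊓ W(⋃_{i=0}^{n} ↓a_i) ≤ W(↓a ∩ ⋃_{i=0}^{n} ↓a_i), where ↓x = {y ∈ 𝒜 : y ≤ x}. -/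
private lemma mem_biSup_finset' {K V A : Type*} [Field K] [AddCommGroup V] [Module K V]
    [DecidableEq A] (W : A → Submodule K V) (B : Set A) (x : V) (hx : x ∈ ⨆ b ∈ B, W b) :
    ∃ u : Finset A, ↑u ⊆ B ∧ x ∈ ⨆ b ∈ (u : Set A), W b := by
  rw [iSup_subtype'] at hx
  rw [Submodule.mem_iSup_iff_exists_finset] at hx
  obtain ⟨s, hs⟩ := hx
  refine ⟨s.image Subtype.val, ?_, ?_⟩
  · intro a ha
    simp only [Finset.coe_image, Set.mem_image, Finset.mem_coe] at ha
    obtain ⟨b, _, rfl⟩ := ha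
    exact b.2
  · refine (iSup₂_le fun i hi => ?_ : (⨆ i ∈ s, W ↑i) ≤ _) hs
    exact le_iSup₂ (f := fun b (_ : b ∈ ((s.image Subtype.val : Finset A) : Set A)) => W b)
      (i : A) (Finset.mem_coe.mpr (Finset.mem_image_of_mem _ hi))

private lemma biSup_iUnion_Iic' {K V A : Type*} [Field K] [AddCommGroup V] [Module K V]
    [PartialOrder A] (W : A → Submodule K V) (hW : Monotone W) (s : Set A) :
    (⨆ b ∈ ⋃ c ∈ s, Set.Iic c, W b) = ⨆ c ∈ s, W c := by
  apply le_antisymm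
  · refine iSup₂_le fun b hb => ?_
    obtain ⟨c, hc, hbc⟩ := Set.mem_iUnion₂.mp hb
    exact (hW hbc).trans (le_iSup₂ (f := fun c _ => W c) c hc)
  · refine iSup₂_le fun c hc => ?_
    have hc' : c ∈ ⋃ c' ∈ s, Set.Iic c' := Set.mem_biUnion hc Set.self_mem_Iic
    exact le_iSup₂ (f := fun b (_ : b ∈ ⋃ c' ∈ s, Set.Iic c') => W b) c hc'

private lemma key_lemma' {K V A : Type*} [Field K] [AddCommGroup V] [Module K V]
    [PartialOrder A] [DecidableEq A] (W : A → Submodule K V) (hW : Monotone W)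
    (h : ∀ (a : A) (n : ℕ) (c : Fin (n + 1) → A),
        W a ⊓ (⨆ b ∈ (⋃ i, Set.Iic (c i)), W b) ≤
          ⨆ b ∈ (Set.Iic a ∩ ⋃ i, Set.Iic (c i)), W b)
    (v : Finset A) :
    ∀ u : Finset A, (⨆ b ∈ (u : Set A), W b) ⊓ (⨆ c ∈ (v : Set A), W c) ≤
      ⨆ b ∈ ((⋃ a ∈ (u : Set A), Set.Iic a) ∩ ⋃ a ∈ (v : Set A), Set.Iic a), W b := by
  intro u
  induction u using Finset.induction_on with
  | empty => simp
  | @insert a u' ha IH =>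
    rcases v.eq_empty_or_nonempty with rfl | hv
    · simp
    intro x hx
    rw [Submodule.mem_inf] at hx
    obtain ⟨hx1, hx2⟩ := hx
    rw [Finset.coe_insert, iSup_insert] at hx1
    obtain ⟨x0, hx0, y, hy, hxy⟩ := Submodule.mem_sup.mp hx1
    set w := v ∪ u' with hwdef
    have hwcard : 0 < w.card :=
      Finset.card_pos.mpr ⟨hv.choose, Finset.mem_union_left _ hv.choose_spec⟩
    set fam : Fin (w.card - 1 + 1) → A := fun i =>
      w.toList.get ⟨i, by
        have h1 := i.isLt
        have h2 : w.toList.length = w.card := Finset.length_toList _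
        omega⟩ with hfamdef
    have hfam : (⋃ i, Set.Iic (fam i)) = ⋃ b ∈ (w : Set A), Set.Iic b := by
      ext z
      simp only [Set.mem_iUnion, Finset.mem_coe, Set.mem_Iic, exists_prop]
      constructor
      · rintro ⟨i, hi⟩
        exact ⟨fam i, Finset.mem_toList.mp (List.get_mem _ _), hi⟩
      · rintro ⟨b, hbw, hzb⟩
        obtain ⟨j, hj⟩ := List.mem_iff_get.mp (Finset.mem_toList.mpr hbw)
        have hjlt : (j : ℕ) < w.card - 1 + 1 := by
          have h1 := j.isLt
          have h2 : w.toList.length = w.card := Finset.length_toList _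
          omega
        refine ⟨⟨(j : ℕ), hjlt⟩, ?_⟩
        have : fam ⟨(j : ℕ), hjlt⟩ = b := by
          rw [hfamdef, ← hj]
        rw [this]; exact hzb
    have hwsplit : (⋃ c ∈ (w : Set A), Set.Iic c)
        = (⋃ c ∈ (v : Set A), Set.Iic c) ∪ (⋃ c ∈ (u' : Set A), Set.Iic c) := by
      rw [hwdef, Finset.coe_union, Set.biUnion_union]
    have hxv : x ∈ ⨆ b ∈ (⋃ c ∈ (v : Set A), Set.Iic c), W b :=
      (biSup_iUnion_Iic' W hW _).ge hx2
    have hyu : y ∈ ⨆ b ∈ (⋃ c ∈ (u' : Set A), Set.Iic c), W b :=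
      (biSup_iUnion_Iic' W hW _).ge hy
    have hx0eq : x0 = x - y := eq_sub_of_add_eq hxy
    have hx0' : x0 ∈ ⨆ b ∈ (Set.Iic a ∩ ⋃ i, Set.Iic (fam i)), W b := by
      apply h a _ fam
      refine Submodule.mem_inf.mpr ⟨hx0, ?_⟩
      rw [hfam, hwsplit, iSup_union, hx0eq]
      exact sub_mem (Submodule.mem_sup_left hxv) (Submodule.mem_sup_right hyu)
    rw [hfam, hwsplit, Set.inter_union_distrib_left, iSup_union] at hx0'
    obtain ⟨z, hz, t, ht, hzt⟩ := Submodule.mem_sup.mp hx0'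
    have hz_target : z ∈ ⨆ b ∈ ((⋃ c ∈ ((insert a u' : Finset A) : Set A), Set.Iic c)
        ∩ ⋃ c ∈ (v : Set A), Set.Iic c), W b := by
      have hle := biSup_mono (f := W)
        (p := fun b => b ∈ Set.Iic a ∩ ⋃ c ∈ (v : Set A), Set.Iic c)
        (q := fun b => b ∈ (⋃ c ∈ ((insert a u' : Finset A) : Set A), Set.Iic c)
          ∩ ⋃ c ∈ (v : Set A), Set.Iic c)
        (fun b hb => ⟨Set.mem_biUnion (by simp) hb.1, hb.2⟩)
      exact hle hz
    have ht' : t ∈ ⨆ c ∈ (u' : Set A), W c := by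
      rw [← biSup_iUnion_Iic' W hW]
      have hle := biSup_mono (f := W)
        (p := fun b => b ∈ Set.Iic a ∩ ⋃ c ∈ (u' : Set A), Set.Iic c)
        (q := fun b => b ∈ ⋃ c ∈ (u' : Set A), Set.Iic c) (fun b hb => hb.2)
      exact hle ht
    have hz_v : z ∈ ⨆ c ∈ (v : Set A), W c := by
      rw [← biSup_iUnion_Iic' W hW]
      have hle := biSup_mono (f := W)
        (p := fun b => b ∈ Set.Iic a ∩ ⋃ c ∈ (v : Set A), Set.Iic c)
        (q := fun b => b ∈ ⋃ c ∈ (v : Set A), Set.Iic c) (fun b hb => hb.2)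
      exact hle hz
    have hxz_u : x - z ∈ ⨆ c ∈ (u' : Set A), W c := by
      have hxz : x - z = t + y := by
        rw [← hxy, hx0eq] at *
        rw [← hzt] at *
        abel
      rw [hxz]
      exact add_mem ht' hy
    have hxz_v : x - z ∈ ⨆ c ∈ (v : Set A), W c := sub_mem hx2 hz_v
    have hIH := IH (Submodule.mem_inf.mpr ⟨hxz_u, hxz_v⟩)
    have hIH' : x - z ∈ ⨆ b ∈ ((⋃ c ∈ ((insert a u' : Finset A) : Set A), Set.Iic c)
        ∩ ⋃ c ∈ (v : Set A), Set.Iic c), W b := by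
      have hle := biSup_mono (f := W)
        (p := fun b => b ∈ (⋃ c ∈ (u' : Set A), Set.Iic c) ∩ ⋃ c ∈ (v : Set A), Set.Iic c)
        (q := fun b => b ∈ (⋃ c ∈ ((insert a u' : Finset A) : Set A), Set.Iic c)
          ∩ ⋃ c ∈ (v : Set A), Set.Iic c)
        (fun b hb => by
          obtain ⟨c, hc, hbc⟩ := Set.mem_iUnion₂.mp hb.1
          exact ⟨Set.mem_biUnion (by simp [Finset.mem_coe.mp hc]) hbc, hb.2⟩)
      exact hle hIH
    have := add_mem hz_target hIH'
    simpa using this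

/-- For any poset `𝒜`, a monotone `W : 𝒜 → Submodule K V` satisfies
the intersection property (I) iff it satisfies condition (C2): for every `a`, `n`,
and finite family `a_0, …, a_n`,
`W a ⊓ W(⋃ i, ↓aᵢ) ≤ W(↓a ∩ ⋃ i, ↓aᵢ)`. -/
theorem stmt_10 {K V A : Type*} [Field K] [AddCommGroup V] [Module K V]
    [PartialOrder A]
    (W : A → Submodule K V) (hW : Monotone W) :
    (∀ B C : Set A, IsLowerSet B → IsLowerSet C →
        (⨆ b ∈ B, W b) ⊓ (⨆ c ∈ C, W c) ≤ ⨆ a ∈ B ∩ C, W a) ↔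
      (∀ (a : A) (n : ℕ) (c : Fin (n + 1) → A),
        W a ⊓ (⨆ b ∈ (⋃ i, Set.Iic (c i)), W b) ≤
          ⨆ b ∈ (Set.Iic a ∩ ⋃ i, Set.Iic (c i)), W b) := by
  constructor
  · intro hI a n c
    have hB : IsLowerSet (Set.Iic a) := isLowerSet_Iic a
    have hC : IsLowerSet (⋃ i, Set.Iic (c i)) := isLowerSet_iUnion fun i => isLowerSet_Iic _
    have h1 : W a ≤ ⨆ b ∈ Set.Iic a, W b :=
      le_iSup₂ (f := fun b (_ : b ∈ Set.Iic a) => W b) a le_rfl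
    exact le_trans (inf_le_inf_right _ h1) (hI _ _ hB hC)
  · intro h B C hB hC x hx
    classical
    rw [Submodule.mem_inf] at hx
    obtain ⟨u, huB, hxu⟩ := mem_biSup_finset' W B x hx.1
    obtain ⟨v, hvC, hxv⟩ := mem_biSup_finset' W C x hx.2
    have hkey := key_lemma' W hW h v u (Submodule.mem_inf.mpr ⟨hxu, hxv⟩)
    have hle := biSup_mono (f := W)
      (p := fun b => b ∈ (⋃ a ∈ (u : Set A), Set.Iic a) ∩ ⋃ a ∈ (v : Set A), Set.Iic a)
      (q := fun b => b ∈ B ∩ C)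
      (fun b hb => by
        obtain ⟨a1, ha1, hba1⟩ := Set.mem_iUnion₂.mp hb.1
        obtain ⟨a2, ha2, hba2⟩ := Set.mem_iUnion₂.mp hb.2
        exact ⟨hB hba1 (huB ha1), hC hba2 (hvC ha2)⟩)
    exact hle hkey
end

section
/- Let 𝒜 be a partially ordered set, B ⊆ 𝒜 a lower set of 𝒜 regarded as a partially ordered set with the induced order, V a vector space over a field K, and W : 𝒜 → Submodule K V a monotone map. If W is decomposable, then the restriction of W to B is decomposable. -/
/-- If a monotone `W : 𝒜 → Submodule K V` is decomposable and
`B ⊆ 𝒜` is a lower set (with the induced order), then the restriction of `W`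
to `B` is decomposable. -/
theorem stmt_11 {K V A : Type*} [Field K] [AddCommGroup V] [Module K V]
    [PartialOrder A]
    (B : Set A) (hB : IsLowerSet B)
    (W : A → Submodule K V) (hW : Monotone W)
    (hdec : ∃ s : A → Submodule K V,
        (∀ a : A, s a ⊓ (⨆ b, ⨆ _ : b ≠ a, s b) = ⊥) ∧
        (∀ a : A, W a = ⨆ b, ⨆ _ : b ≤ a, s b)) :
    ∃ s : B → Submodule K V,
      (∀ a : B, s a ⊓ (⨆ b, ⨆ _ : b ≠ a, s b) = ⊥) ∧
      (∀ a : B, W a = ⨆ b : B, ⨆ _ : b ≤ a, s b) := by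
  obtain ⟨s, hind, hsup⟩ := hdec
  refine ⟨fun b => s b, fun a => ?_, fun a => ?_⟩
  · refine le_bot_iff.mp ?_
    rw [← hind a]
    refine inf_le_inf_left _ ?_
    refine iSup_le fun b => iSup_le fun hb => ?_
    have hba : (b : A) ≠ a := fun h => hb (Subtype.ext h)
    exact le_iSup_of_le (b : A) (le_iSup_of_le hba le_rfl)
  · rw [hsup a]
    apply le_antisymm
    · refine iSup_le fun b => iSup_le fun hb => ?_
      have hbB : b ∈ B := hB hb a.2
      exact le_iSup_of_le ⟨b, hbB⟩ (le_iSup_of_le hb le_rfl)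
    · refine iSup_le fun b => iSup_le fun hb => ?_
      exact le_iSup_of_le (b : A) (le_iSup_of_le hb le_rfl)
end

section
/- Let 𝒜 and ℬ be partially ordered sets, f : 𝒜 → ℬ an order embedding (a₁ ≤ a₂ if and only if f a₁ ≤ f a₂), V a vector space over a field K, and W : 𝒜 → Submodule K V a monotone map. Define the pushforward f_*W : ℬ → Submodule K V by f_*W(b) = ⨆_{a ∈ 𝒜, f a ≤ b} W a. Then W is decomposable if and only if f_*W is decomposable. -/
/-- For an order embedding `f : 𝒜 ↪o ℬ` and a monotone
`W : 𝒜 → Submodule K V`, with pushforward `f_*W (b) = ⨆_{f a ≤ b} W a`,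
`W` is decomposable iff `f_*W` is decomposable. -/
theorem stmt_13 {K V A B : Type*} [Field K] [AddCommGroup V] [Module K V]
    [PartialOrder A] [PartialOrder B]
    (f : A ↪o B) (W : A → Submodule K V) (hW : Monotone W) :
    (∃ s : A → Submodule K V,
        (∀ a : A, s a ⊓ (⨆ b, ⨆ _ : b ≠ a, s b) = ⊥) ∧
        (∀ a : A, W a = ⨆ b, ⨆ _ : b ≤ a, s b)) ↔
      (∃ t : B → Submodule K V,
        (∀ b : B, t b ⊓ (⨆ c, ⨆ _ : c ≠ b, t c) = ⊥) ∧
        (∀ b : B, (⨆ a, ⨆ _ : f a ≤ b, W a) = ⨆ c, ⨆ _ : c ≤ b, t c)) := by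
  constructor
  · rintro ⟨s, hind, hsum⟩
    refine ⟨fun b => ⨆ a, ⨆ _ : f a = b, s a, ?_, ?_⟩
    · intro b
      have hsub : (⨆ c, ⨆ _ : c ≠ b, ⨆ a, ⨆ _ : f a = c, s a) ≤
          ⨆ a, ⨆ _ : f a ≠ b, s a := by
        refine iSup₂_le fun c hc => iSup₂_le fun a ha => ?_
        exact le_iSup₂ (f := fun a (_ : f a ≠ b) => s a) a (ha ▸ hc)
      by_cases hb : ∃ a₀, f a₀ = b
      · obtain ⟨a₀, rfl⟩ := hb
        have h1 : (⨆ a, ⨆ _ : f a = f a₀, s a) ≤ s a₀ :=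
          iSup₂_le fun a ha => by
            have : a = a₀ := f.injective ha
            exact this ▸ le_rfl
        have h2 : (⨆ a, ⨆ _ : f a ≠ f a₀, s a) ≤ ⨆ a, ⨆ _ : a ≠ a₀, s a :=
          iSup₂_le fun a ha =>
            le_iSup₂ (f := fun a (_ : a ≠ a₀) => s a) a (fun h => ha (h ▸ rfl))
        have := inf_le_inf h1 (hsub.trans h2)
        exact le_bot_iff.mp (this.trans (hind a₀).le)
      · have h1 : (⨆ a, ⨆ _ : f a = b, s a) = ⊥ :=
          le_bot_iff.mp (iSup₂_le fun a ha => absurd ⟨a, ha⟩ hb)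
        exact le_bot_iff.mp (inf_le_left.trans h1.le)
    · intro b
      have hM : (⨆ a, ⨆ _ : f a ≤ b, W a) = ⨆ a, ⨆ _ : f a ≤ b, s a := by
        refine le_antisymm (iSup₂_le fun a hab => ?_) (iSup₂_le fun a hab => ?_)
        · rw [hsum a]
          exact iSup₂_le fun a' ha' =>
            le_iSup₂ (f := fun a (_ : f a ≤ b) => s a) a' ((f.monotone ha').trans hab)
        · have : s a ≤ W a := by
            rw [hsum a]
            exact le_iSup₂ (f := fun a' (_ : a' ≤ a) => s a') a le_rfl
          exact this.trans (le_iSup₂ (f := fun a (_ : f a ≤ b) => W a) a hab)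
      rw [hM]
      refine le_antisymm (iSup₂_le fun a hab => ?_) (iSup₂_le fun c hc => ?_)
      · refine le_iSup₂_of_le (f a) hab ?_
        exact le_iSup₂ (f := fun a' (_ : f a' = f a) => s a') a rfl
      · exact iSup₂_le fun a ha =>
          le_iSup₂ (f := fun a (_ : f a ≤ b) => s a) a (ha ▸ hc)
  · rintro ⟨t, hind, hsum⟩
    -- t is supported on the image of f
    have hsupp : ∀ c : B, (¬ ∃ a, f a = c) → t c = ⊥ := by
      intro c hc
      have h1 : t c ≤ ⨆ a, ⨆ _ : f a ≤ c, W a := by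
        rw [hsum c]
        exact le_iSup₂ (f := fun c' (_ : c' ≤ c) => t c') c le_rfl
      have h2 : (⨆ a, ⨆ _ : f a ≤ c, W a) ≤ ⨆ c', ⨆ _ : c' ≠ c, t c' := by
        refine iSup₂_le fun a hac => ?_
        have hWa : W a ≤ ⨆ c', ⨆ _ : c' ≤ f a, t c' := by
          rw [← hsum (f a)]
          exact le_iSup₂ (f := fun a' (_ : f a' ≤ f a) => W a') a le_rfl
        refine hWa.trans (iSup₂_le fun c' hc' => ?_)
        refine le_iSup₂ (f := fun c' (_ : c' ≠ c) => t c') c' fun h => ?_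
        exact hc ⟨a, le_antisymm hac (h ▸ hc')⟩
      have : t c ≤ t c ⊓ ⨆ c', ⨆ _ : c' ≠ c, t c' := le_inf le_rfl (h1.trans h2)
      exact le_bot_iff.mp (this.trans (hind c).le)
    refine ⟨fun a => t (f a), ?_, ?_⟩
    · intro a
      have h2 : (⨆ a', ⨆ _ : a' ≠ a, t (f a')) ≤ ⨆ c, ⨆ _ : c ≠ f a, t c :=
        iSup₂_le fun a' ha' =>
          le_iSup₂ (f := fun c (_ : c ≠ f a) => t c) (f a')
            (fun h => ha' (f.injective h))
      exact le_bot_iff.mp ((inf_le_inf le_rfl h2).trans (hind (f a)).le)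
    · intro a
      have hWa : W a = ⨆ c, ⨆ _ : c ≤ f a, t c := by
        rw [← hsum (f a)]
        refine le_antisymm ?_ (iSup₂_le fun a' ha' => hW (f.le_iff_le.mp ha'))
        exact le_iSup₂ (f := fun a' (_ : f a' ≤ f a) => W a') a le_rfl
      rw [hWa]
      refine le_antisymm (iSup₂_le fun c hc => ?_) (iSup₂_le fun a' ha' => ?_)
      · by_cases h : ∃ a', f a' = c
        · obtain ⟨a', rfl⟩ := h
          exact le_iSup₂ (f := fun a' (_ : a' ≤ a) => t (f a')) a' (f.le_iff_le.mp hc)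
        · rw [hsupp c h]; exact bot_le
      · exact le_iSup₂ (f := fun c (_ : c ≤ f a) => t c) (f a') (f.monotone ha')
end

section
/- Let 𝒜 and ℬ be partially ordered sets, f : 𝒜 → ℬ an order embedding (a₁ ≤ a₂ if and only if f a₁ ≤ f a₂), V a vector space over a field K, and W : 𝒜 → Submodule K V a monotone map, with pushforward f_*W : ℬ → Submodule K V given by f_*W(b) = ⨆_{a ∈ 𝒜, f a ≤ b} W a. If t : ℬ → Submodule K V is a decomposition of f_*W, then the family s : 𝒜 → Submodule K V defined by s a = t (f a) is a decomposition of W. -/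
/-- For an order embedding `f : 𝒜 ↪o ℬ` and a monotone
`W : 𝒜 → Submodule K V` with pushforward `f_*W (b) = ⨆_{f a ≤ b} W a`,
if `t` is a decomposition of `f_*W` then `a ↦ t (f a)` is a decomposition of `W`. -/
theorem stmt_14 {K V A B : Type*} [Field K] [AddCommGroup V] [Module K V]
    [PartialOrder A] [PartialOrder B]
    (f : A ↪o B) (W : A → Submodule K V) (hW : Monotone W)
    (t : B → Submodule K V)
    (ht_indep : ∀ b : B, t b ⊓ (⨆ c, ⨆ _ : c ≠ b, t c) = ⊥)
    (ht_sum : ∀ b : B, (⨆ a, ⨆ _ : f a ≤ b, W a) = ⨆ c, ⨆ _ : c ≤ b, t c) :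
    (∀ a : A, t (f a) ⊓ (⨆ b, ⨆ _ : b ≠ a, t (f b)) = ⊥) ∧
      (∀ a : A, W a = ⨆ b, ⨆ _ : b ≤ a, t (f b)) := by
  have hbot : ∀ c : B, c ∉ Set.range f → t c = ⊥ := by
    intro c hc
    have h1 : t c ≤ ⨆ c', ⨆ _ : c' ≤ c, t c' := le_biSup _ le_rfl
    rw [← ht_sum c] at h1
    have h2 : t c ≤ ⨆ c', ⨆ _ : c' ≠ c, t c' := by
      refine h1.trans (iSup_le fun a => iSup_le fun ha => ?_)
      have h3 : W a ≤ ⨆ c', ⨆ _ : c' ≤ f a, t c' := by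
        rw [← ht_sum (f a)]
        exact le_biSup _ le_rfl
      refine h3.trans (iSup_le fun c' => iSup_le fun hc' => ?_)
      have hne : c' ≠ c := by
        rintro rfl
        exact hc ⟨a, le_antisymm ha hc'⟩
      exact le_biSup _ hne
    refine le_antisymm ?_ bot_le
    rw [← ht_indep c]
    exact le_inf le_rfl h2
  constructor
  · intro a
    refine le_antisymm ?_ bot_le
    rw [← ht_indep (f a)]
    refine inf_le_inf_left _ (iSup_le fun b => iSup_le fun hb => ?_)
    exact le_biSup _ (fun h => hb (f.injective h))
  · intro a
    have hW_eq : W a = ⨆ a', ⨆ _ : f a' ≤ f a, W a' :=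
      le_antisymm (le_biSup _ le_rfl)
        (iSup_le fun a' => iSup_le fun h => hW (f.le_iff_le.mp h))
    rw [hW_eq, ht_sum (f a)]
    refine le_antisymm (iSup_le fun c => iSup_le fun hc => ?_)
      (iSup_le fun b => iSup_le fun hb => ?_)
    · by_cases h : c ∈ Set.range f
      · obtain ⟨b, rfl⟩ := h
        exact le_biSup (fun b => t (f b)) (f.le_iff_le.mp hc)
      · rw [hbot c h]; exact bot_le
    · exact le_biSup _ (f.monotone hb)
end

section
/- Let 𝒜 be a partially ordered set, V a vector space over a field K, and W : 𝒜 → Submodule K V a monotone map. Let 𝒰(𝒜) be the set of lower sets of 𝒜, ordered by inclusion, and define i_*W : 𝒰(𝒜) → Submodule K V by i_*W(B) = ⨆_{b ∈ B} W b. Then W is decomposable if and only if i_*W is decomposable. -/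
/-- For a monotone `W : 𝒜 → Submodule K V` and the poset `𝒰(𝒜)` of
lower sets of `𝒜` ordered by inclusion, with `i_*W (B) = ⨆_{b ∈ B} W b`,
`W` is decomposable iff `i_*W` is decomposable. -/
theorem stmt_15 {K V A : Type*} [Field K] [AddCommGroup V] [Module K V]
    [PartialOrder A]
    (W : A → Submodule K V) (hW : Monotone W) :
    (∃ s : A → Submodule K V,
        (∀ a : A, s a ⊓ (⨆ b, ⨆ _ : b ≠ a, s b) = ⊥) ∧
        (∀ a : A, W a = ⨆ b, ⨆ _ : b ≤ a, s b)) ↔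
      (∃ t : LowerSet A → Submodule K V,
        (∀ B : LowerSet A, t B ⊓ (⨆ C, ⨆ _ : C ≠ B, t C) = ⊥) ∧
        (∀ B : LowerSet A, (⨆ b ∈ (B : Set A), W b) = ⨆ C, ⨆ _ : C ≤ B, t C)) := by
  classical
  have hIicIic : ∀ a b : A, LowerSet.Iic a ≤ LowerSet.Iic b ↔ a ≤ b := by
    intro a b
    rw [LowerSet.Iic_le, LowerSet.mem_Iic_iff]
  constructor
  · rintro ⟨s, hind, hsum⟩
    refine ⟨fun C => ⨆ a, ⨆ _ : C = LowerSet.Iic a, s a, fun B => ?_, fun B => ?_⟩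
    · beta_reduce
      by_cases h : ∃ a, B = LowerSet.Iic a
      · obtain ⟨a, rfl⟩ := h
        have h1 : (⨆ b, ⨆ _ : LowerSet.Iic a = LowerSet.Iic b, s b) = s a := by
          apply le_antisymm
          · refine iSup_le fun b => iSup_le fun hb => ?_
            rw [LowerSet.Iic_inj] at hb
            rw [hb]
          · exact le_iSup_of_le a (le_iSup_of_le rfl le_rfl)
        rw [h1]
        have h2 : (⨆ C, ⨆ _ : C ≠ LowerSet.Iic a,
            ⨆ b, ⨆ _ : C = LowerSet.Iic b, s b) ≤ ⨆ b, ⨆ _ : b ≠ a, s b := by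
          refine iSup_le fun C => iSup_le fun hC => iSup_le fun b => iSup_le fun hb => ?_
          subst hb
          refine le_iSup_of_le b (le_iSup_of_le (fun hba => hC (by rw [hba])) le_rfl)
        refine le_bot_iff.mp ?_
        calc s a ⊓ _ ≤ s a ⊓ ⨆ b, ⨆ _ : b ≠ a, s b := inf_le_inf_left _ h2
          _ = ⊥ := hind a
      · have h1 : (⨆ b, ⨆ _ : B = LowerSet.Iic b, s b) = ⊥ := by
          refine le_bot_iff.mp (iSup_le fun b => iSup_le fun hb => absurd ⟨b, hb⟩ h)
        rw [h1, bot_inf_eq]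
    · apply le_antisymm
      · refine iSup_le fun b => iSup_le fun hb => ?_
        rw [hsum b]
        refine iSup_le fun c => iSup_le fun hc => ?_
        refine le_iSup_of_le (LowerSet.Iic c) (le_iSup_of_le ?_ ?_)
        · exact LowerSet.Iic_le.mpr (B.lower hc hb)
        · exact le_iSup_of_le c (le_iSup_of_le rfl le_rfl)
      · refine iSup_le fun C => iSup_le fun hC => iSup_le fun b => iSup_le fun hb => ?_
        subst hb
        have hbB : b ∈ (B : Set A) := LowerSet.Iic_le.mp hC
        refine le_iSup_of_le b (le_iSup_of_le hbB ?_)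
        rw [hsum b]
        exact le_iSup_of_le b (le_iSup_of_le le_rfl le_rfl)
  · rintro ⟨t, hind, hsum⟩
    have hWb : ∀ b : A, W b = ⨆ C, ⨆ _ : C ≤ LowerSet.Iic b, t C := by
      intro b
      rw [← hsum (LowerSet.Iic b)]
      apply le_antisymm
      · exact le_iSup_of_le b (le_iSup_of_le (LowerSet.mem_Iic_iff.mpr le_rfl) le_rfl)
      · exact iSup_le fun c => iSup_le fun hc => hW (LowerSet.mem_Iic_iff.mp hc)
    have hbot : ∀ C : LowerSet A, (¬∃ b, C = LowerSet.Iic b) → t C = ⊥ := by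
      intro C hC
      have h1 : t C ≤ ⨆ C', ⨆ _ : C' ≠ C, t C' := by
        have h2 : t C ≤ ⨆ b ∈ (C : Set A), W b := by
          rw [hsum C]
          exact le_iSup_of_le C (le_iSup_of_le le_rfl le_rfl)
        refine h2.trans (iSup_le fun b => iSup_le fun hb => ?_)
        rw [hWb b]
        refine iSup_le fun C' => iSup_le fun hC' => ?_
        refine le_iSup_of_le C' (le_iSup_of_le ?_ le_rfl)
        rintro rfl
        exact hC ⟨b, le_antisymm hC' (LowerSet.Iic_le.mpr hb)⟩
      refine le_bot_iff.mp ?_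
      calc t C ≤ t C ⊓ ⨆ C', ⨆ _ : C' ≠ C, t C' := le_inf le_rfl h1
        _ = ⊥ := hind C
    refine ⟨fun a => t (LowerSet.Iic a), fun a => ?_, fun a => ?_⟩
    · refine le_bot_iff.mp ?_
      have h2 : (⨆ b, ⨆ _ : b ≠ a, t (LowerSet.Iic b)) ≤
          ⨆ C, ⨆ _ : C ≠ LowerSet.Iic a, t C := by
        refine iSup_le fun b => iSup_le fun hb => ?_
        exact le_iSup_of_le (LowerSet.Iic b)
          (le_iSup_of_le (fun h => hb (LowerSet.Iic_inj.mp h)) le_rfl)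
      calc t (LowerSet.Iic a) ⊓ _ ≤ _ := inf_le_inf_left _ h2
        _ = ⊥ := hind (LowerSet.Iic a)
    · rw [hWb a]
      apply le_antisymm
      · refine iSup_le fun C => iSup_le fun hC => ?_
        by_cases h : ∃ b, C = LowerSet.Iic b
        · obtain ⟨b, rfl⟩ := h
          exact le_iSup_of_le b (le_iSup_of_le ((hIicIic b a).mp hC) le_rfl)
        · rw [hbot C h]
          exact bot_le
      · refine iSup_le fun b => iSup_le fun hb => ?_
        exact le_iSup_of_le (LowerSet.Iic b) (le_iSup_of_le ((hIicIic b a).mpr hb) le_rfl)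
end
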